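/- arXiv:1804.02511 — 4 statements merged into one kernel-verified Lean document; each statement's English description precedes it below -/
import Mathlib

section
/- The affine index polynomial P_K(t) is invariant under oriented virtual isotopy: if two labeled oriented virtual knot diagrams are related by oriented classical Reidemeister moves, virtual Reidemeister moves, or the detour move, then their affine index polynomials are equal; hence P_K(t) is an invariant of virtual knots. -/
/-!
# Virtual knots and links via signed Gauss codes

A virtual knot or link diagram, up to the virtual Reidemeister moves and the
detour move, is faithfully encoded by its signed oriented Gauss code: the
cyclic sequence, along each component, of passages through the classical
crossings, each passage recording the crossing's name, whether the strand
passes over or under, and the crossing sign.  Virtual crossings and the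
detour move are invisible in this encoding, so oriented virtual isotopy is
generated by the oriented classical Reidemeister moves together with
re-encoding moves (rotation of the base point, permutation of the components,
renaming of the crossings).
-/

open LaurentPolynomial

/-- A passage of a strand through a classical crossing of a virtual diagram. -/
structure Passage where
  id : ℕ
  isOver : Bool
  sign : ℤ
  deriving DecidableEq, Repr

instance : Inhabited Passage := ⟨⟨0, false, 0⟩⟩

/-- The affine-label increment when the strand passes through a crossing:
crossing to the left increases the label by one, crossing to the right
decreases it by one.  For a positive crossing the over-strand crosses to the
right and the under-strand to the left; for a negative crossing it is the
other way around.  Labels are unchanged at virtual crossings. -/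
def Passage.inc (p : Passage) : ℤ := if p.isOver then -p.sign else p.sign

/-- The Gauss code of one oriented circle component. -/
abbrev KCode := List Passage

/-- The list of classical crossing names appearing in a code. -/
def crossIds (a : KCode) : List ℕ := (a.map Passage.id).dedup

/-- The number of classical crossings. -/
def numCross (a : KCode) : ℕ := (crossIds a).length

/-- A valid knot code: every crossing has sign `±1` and occurs exactly once as
an over-passage and exactly once as an under-passage, with consistent sign. -/
def ValidK (a : KCode) : Prop :=
  ∀ p ∈ a, (p.sign = 1 ∨ p.sign = -1) ∧
    (a.filter (fun q => q.id == p.id && q.isOver)).length = 1 ∧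
    (a.filter (fun q => q.id == p.id && !q.isOver)).length = 1 ∧
    (∀ q ∈ a, q.id = p.id → q.sign = p.sign)

/-- The canonical affine label of the arc entering the `k`-th passage
(base label `0` on the arc entering the `0`-th passage). -/
def labelAt (a : KCode) (k : ℕ) : ℤ := ((a.take k).map Passage.inc).sum

/-- Position of the over-passage of crossing `i`. -/
def overPos (a : KCode) (i : ℕ) : ℕ := a.findIdx (fun p => p.id == i && p.isOver)

/-- Position of the under-passage of crossing `i`. -/
def underPos (a : KCode) (i : ℕ) : ℕ := a.findIdx (fun p => p.id == i && !p.isOver)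

/-- The sign of crossing `i`. -/
def sgn (a : KCode) (i : ℕ) : ℤ :=
  ((a.find? (fun p => p.id == i)).map Passage.sign).getD 0

/-- The weight `W_K(c)` of a crossing `c`: with incoming labels `a` (left) and
`b` (right) it is `W₊ = a - b - 1` if `sgn c = 1` and `W₋ = b - a + 1` if
`sgn c = -1`; equivalently it is
(label entering the over-passage) − (label entering the under-passage) − sign. -/
def wt (a : KCode) (i : ℕ) : ℤ :=
  labelAt a (overPos a i) - labelAt a (underPos a i) - sgn a i

/-- The affine index polynomial `P_K(t) = ∑_c sgn(c) (t^{W_K(c)} - 1)`. -/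
noncomputable def affP (a : KCode) : LaurentPolynomial ℤ :=
  ((crossIds a).map (fun i => (C (sgn a i)) * (T (wt a i) - 1))).sum

/-- The signed crossing count `wr_n(K) = ∑_{c : W_K(c) = n} sgn(c)`. -/
def wrn (a : KCode) (n : ℤ) : ℤ :=
  (((crossIds a).filter (fun i => wt a i == n)).map (sgn a)).sum

/-- A crossing is odd when it flanks an odd number of symbols of the Gauss
code, i.e. when the positions of its two passages differ by an even number. -/
def OddCross (a : KCode) (i : ℕ) : Bool := (overPos a i + underPos a i) % 2 == 0

/-- The odd writhe `J(K)`: the sum of the signs of the odd crossings. -/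
def oddWrithe (a : KCode) : ℤ := (((crossIds a).filter (OddCross a)).map (sgn a)).sum

/-- The reverse `K̄` of `K`: the same diagram with reversed orientation. -/
def reverseK (a : KCode) : KCode := a.reverse

/-- The (flat) mirror image `K*`: every classical crossing is switched, which
exchanges over- and under-passages and reverses all crossing signs. -/
def switchAll (a : KCode) : KCode := a.map (fun p => ⟨p.id, !p.isOver, -p.sign⟩)

/-- The vertical mirror image `K^!`: reflect the diagram in a plane
perpendicular to the plane of the diagram (which keeps the over/under data
and reverses all crossing signs) and reverse the orientation. -/
def vmirror (a : KCode) : KCode := (a.map (fun p => ⟨p.id, p.isOver, -p.sign⟩)).reverse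

/-- Rename the crossings of a code by `f`. -/
def relabel (f : ℕ → ℕ) (a : KCode) : KCode := a.map (fun p => { p with id := f p.id })

/-! ## Links -/

/-- A link code: a list of circle components. -/
abbrev LCode := List KCode

/-- Validity of a link code: the crossing data is globally consistent. -/
def ValidLink (L : LCode) : Prop := ValidK L.flatten

def crossIdsL (L : LCode) : List ℕ := crossIds L.flatten

def sgnL (L : LCode) (i : ℕ) : ℤ := sgn L.flatten i

/-- An affine (integer) labeling of the arcs of a link diagram:
`lab c k` is the label of the arc entering the `k`-th passage of the `c`-th
component; at each classical crossing with left incoming label `a` and right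
incoming label `b`, the left outgoing label is `b+1` and the right outgoing
label is `a-1`, i.e. passing through a passage changes the label by its
increment.  Labels are unchanged at virtual crossings. -/
def IsAffineLabeling (L : LCode) (lab : ℕ → ℕ → ℤ) : Prop :=
  ∀ c, c < L.length → ∀ k, k < (L.getD c []).length →
    lab c ((k + 1) % (L.getD c []).length) =
      lab c k + ((L.getD c []).getD k default).inc

/-- Locations `(component, position)` of the passages of crossing `i` that are
over-passages (`sel = true`) resp. under-passages (`sel = false`). -/
def locs (L : LCode) (i : ℕ) (sel : Bool) : List (ℕ × ℕ) :=
  (List.range L.length).flatMap (fun c =>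
    (List.range (L.getD c []).length).filterMap (fun k =>
      if ((L.getD c []).getD k default).id = i ∧ ((L.getD c []).getD k default).isOver = sel
      then some (c, k) else none))

/-- The weight of crossing `i` of a link diagram with affine labeling `lab`. -/
def wtL (L : LCode) (lab : ℕ → ℕ → ℤ) (i : ℕ) : ℤ :=
  lab ((locs L i true).headD (0, 0)).1 ((locs L i true).headD (0, 0)).2
    - lab ((locs L i false).headD (0, 0)).1 ((locs L i false).headD (0, 0)).2
    - sgnL L i

/-- The affine index polynomial of an affinely labeled link diagram. -/
noncomputable def affPL (L : LCode) (lab : ℕ → ℕ → ℤ) : LaurentPolynomial ℤ :=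
  ((crossIdsL L).map (fun i => (C (sgnL L i)) * (T (wtL L lab i) - 1))).sum

/-- The passages of component `c` whose partner passage lies on a different
component. -/
def crossPassages (L : LCode) (c : ℕ) : KCode :=
  (L.getD c []).filter (fun p =>
    ((L.getD c []).filter (fun q => q.id == p.id)).length == 1)

/-- The algebraic intersection number of component `c` with the union of the
other components: the signed count, in the plane, of the crossings of
component `c` with the other components (the strand crossing to the left
counts `+1`, to the right `−1`). -/
def algInt (L : LCode) (c : ℕ) : ℤ := ((crossPassages L c).map Passage.inc).sum

/-- A multi-component diagram is compatible when every component has algebraic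
intersection number zero with the union of the other components. -/
def Compatible (L : LCode) : Prop := ∀ c < L.length, algInt L c = 0

/-! ## Virtual isotopy

Link codes whose components carry an inert tracking label (a natural number);
the labels are preserved by isotopy and are used to follow components through
the births, deaths and saddles of a cobordism. -/

abbrev LLC := List (ℕ × KCode)

def plainL (L : LLC) : LCode := L.map Prod.snd

def idsOf (L : LLC) : List ℕ := crossIdsL (plainL L)

def pieceIds (L : LLC) : List ℕ := L.map Prod.fst

/-- `ReplC c c' segs segs'`: the circle `c'` is obtained from the circle `c`
by replacing, scanning from left to right, an initial batch of the listed
segments (`u` is replaced by `v` for each pair `(u, v)`), leaving `segs'`. -/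
inductive ReplC : KCode → KCode → List (KCode × KCode) → List (KCode × KCode) → Prop
  | nil (c : KCode) (segs : List (KCode × KCode)) : ReplC c c segs segs
  | cons {y y' : KCode} {segs segs' : List (KCode × KCode)} (x u v : KCode) :
      ReplC y y' segs segs' →
      ReplC (x ++ u ++ y) (x ++ v ++ y') ((u, v) :: segs) segs'

/-- `ReplL L L' segs`: the labeled link `L'` is obtained from `L` by
simultaneously performing all the listed segment replacements, in scanning
order. -/
inductive ReplL : LLC → LLC → List (KCode × KCode) → Prop
  | nil : ReplL [] [] []
  | cons {c c' : KCode} {L L' : LLC} {segs segs' : List (KCode × KCode)} (k : ℕ) :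
      ReplC c c' segs segs' → ReplL L L' segs' → ReplL ((k, c) :: L) ((k, c') :: L') segs

/-- `if b then [p, q] else [q, p]`. -/
def pairOf (b : Bool) (p q : Passage) : KCode := if b then [p, q] else [q, p]

/-- A generating move of oriented virtual isotopy on Gauss codes.  The
constructors `perm`, `rotate`, `rename` are inessential re-encodings; in
particular the virtual Reidemeister moves and the detour move leave the Gauss
code unchanged.  The constructors `r1`, `r2`, `r3` are the oriented classical
Reidemeister moves (`r1` and `r2` are stated as insertions; the inverse moves
are recovered by taking the symmetric closure). -/
inductive MoveStep : LLC → LLC → Prop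
  /-- re-ordering the components -/
  | perm {L L' : LLC} (h : L.Perm L') : MoveStep L L'
  /-- moving the base point of a component -/
  | rotate (k : ℕ) (x y : KCode) (L : LLC) :
      MoveStep ((k, x ++ y) :: L) ((k, y ++ x) :: L)
  /-- renaming the crossings injectively -/
  | rename {L : LLC} (f : ℕ → ℕ) (hf : Function.Injective f) :
      MoveStep L (L.map (fun c => (c.1, relabel f c.2)))
  /-- first Reidemeister move: insertion of a kink with a fresh crossing `i` -/
  | r1 {L L' : LLC} (i : ℕ) (o : Bool) (s : ℤ) (hs : s = 1 ∨ s = -1) (hi : i ∉ idsOf L)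
      (h : ReplL L L' [([], [⟨i, o, s⟩, ⟨i, !o, s⟩])]) : MoveStep L L'
  /-- second Reidemeister move: one strand slides across another, creating two
  fresh crossings `i, j` with opposite signs; `o` records whether the first
  strand passes over, `ord` the relative orientation of the strands. -/
  | r2 {L L' : LLC} (i j : ℕ) (o ord : Bool) (s : ℤ) (hs : s = 1 ∨ s = -1)
      (hij : i ≠ j) (hi : i ∉ idsOf L) (hj : j ∉ idsOf L)
      (h : ReplL L L'
        [([], [⟨i, o, s⟩, ⟨j, o, -s⟩]),
         ([], if ord then [⟨j, !o, -s⟩, ⟨i, !o, s⟩] else [⟨i, !o, s⟩, ⟨j, !o, -s⟩])]) :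
      MoveStep L L'
  /-- third Reidemeister move: a strand slides across a crossing.  Crossing
  `i` joins the top and the middle strand, `j` the top and the bottom strand,
  `k` the middle and the bottom strand; on each of the three strands the
  corresponding pair of adjacent passages is transposed.  The product of the
  three signs is `+1`, and the orders of the pairs along the strands are
  correlated with the signs as dictated by the orientations of the three
  strands (`t` records the order along the top strand). -/
  | r3 {L L' : LLC} (i j k : ℕ) (si sj sk : ℤ)
      (hsi : si = 1 ∨ si = -1) (hsj : sj = 1 ∨ sj = -1) (hsk : sk = 1 ∨ sk = -1)
      (hprod : si * sj * sk = 1)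
      (hij : i ≠ j) (hik : i ≠ k) (hjk : j ≠ k)
      (t : Bool) (segs : List (KCode × KCode))
      (hsegs : segs.Perm
        [(pairOf t ⟨i, true, si⟩ ⟨j, true, sj⟩,
          pairOf (!t) ⟨i, true, si⟩ ⟨j, true, sj⟩),
         (pairOf (t == (sj * sk == 1)) ⟨i, false, si⟩ ⟨k, true, sk⟩,
          pairOf (!(t == (sj * sk == 1))) ⟨i, false, si⟩ ⟨k, true, sk⟩),
         (pairOf (t == (si * sk == 1)) ⟨j, false, sj⟩ ⟨k, false, sk⟩,
          pairOf (!(t == (si * sk == 1))) ⟨j, false, sj⟩ ⟨k, false, sk⟩)])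
      (h : ReplL L L' segs) : MoveStep L L'

/-- Oriented virtual isotopy: the equivalence relation generated by the
classical Reidemeister moves, the virtual Reidemeister moves and the detour
move (the latter two being invisible on Gauss codes). -/
def Isotopic : LLC → LLC → Prop := Relation.EqvGen MoveStep

/-! ## Cobordism

A cobordism is a sequence of isotopies, births and deaths of unknotted
circles, and oriented saddle moves.  The schema of a cobordism is the abstract
surface it generates; we track its connected pieces through the component
labels, the genus of each piece, and the total genus of the pieces that have
been closed off, so that the genus of the schema is well defined. -/

/-- A state of a cobordism in progress: the current labeled link diagram (the
label of a circle names the surface piece it bounds), the genus of each piece,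
and the accumulated genus of closed-off pieces. -/
structure CobState where
  link : LLC
  genus : ℕ → ℕ
  closed : ℕ

/-- One step of a virtual cobordism. -/
inductive CobStep : CobState → CobState → Prop
  /-- a virtual isotopy move -/
  | isot {L L' : LLC} (g : ℕ → ℕ) (c : ℕ) (h : MoveStep L L') :
      CobStep ⟨L, g, c⟩ ⟨L', g, c⟩
  /-- birth of an unknotted circle, starting a fresh piece of genus `0` -/
  | birth (k : ℕ) (L : LLC) (g : ℕ → ℕ) (c : ℕ) (hk : k ∉ pieceIds L) :
      CobStep ⟨L, g, c⟩ ⟨(k, []) :: L, Function.update g k 0, c⟩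
  /-- death of an unknotted circle whose piece still has other boundary -/
  | death_keep (k : ℕ) (L : LLC) (g : ℕ → ℕ) (c : ℕ) (hk : k ∈ pieceIds L) :
      CobStep ⟨(k, []) :: L, g, c⟩ ⟨L, g, c⟩
  /-- death of an unknotted circle closing off its piece -/
  | death_close (k : ℕ) (L : LLC) (g : ℕ → ℕ) (c : ℕ) (hk : k ∉ pieceIds L) :
      CobStep ⟨(k, []) :: L, g, c⟩ ⟨L, g, c + g k⟩
  /-- oriented saddle splitting one circle into two (genus unchanged) -/
  | saddle_split (k : ℕ) (x y : KCode) (L : LLC) (g : ℕ → ℕ) (c : ℕ) :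
      CobStep ⟨(k, x ++ y) :: L, g, c⟩ ⟨(k, x) :: (k, y) :: L, g, c⟩
  /-- oriented saddle merging two boundary circles of the same piece
  (the genus of the piece increases by one) -/
  | saddle_merge_same (k : ℕ) (x y : KCode) (L : LLC) (g : ℕ → ℕ) (c : ℕ) :
      CobStep ⟨(k, x) :: (k, y) :: L, g, c⟩
        ⟨(k, x ++ y) :: L, Function.update g k (g k + 1), c⟩
  /-- oriented saddle merging boundary circles of two different pieces
  (the pieces merge and their genera add) -/
  | saddle_merge_diff (j k : ℕ) (x y : KCode) (L : LLC) (g : ℕ → ℕ) (c : ℕ)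
      (hjk : j ≠ k) :
      CobStep ⟨(j, x) :: (k, y) :: L, g, c⟩
        ⟨(j, x ++ y) :: (L.map fun p => if p.1 = k then (j, p.2) else p),
          Function.update (Function.update g j (g j + g k)) k 0, c⟩

/-- A virtual cobordism: a finite sequence of cobordism steps. -/
def Cob : CobState → CobState → Prop := Relation.ReflTransGen CobStep

/-- `L` and `L'` cobound a virtual cobordism (of some genus). -/
def Cobordant (L L' : LLC) : Prop :=
  ∃ g' c', Cob ⟨L, fun _ => 0, 0⟩ ⟨L', g', c'⟩

/-- The knot `a` bounds a virtual surface schema of genus `G`: there is a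
virtual cobordism from `a` to the empty link, and `G` is the total genus of
the pieces of its schema. -/
def BoundsGenus (a : KCode) (G : ℕ) : Prop :=
  ∃ g' : ℕ → ℕ, Cob ⟨[(0, a)], fun _ => 0, 0⟩ ⟨[], g', G⟩

/-! ## Concordance

A genus-zero cobordism (concordance) is one in which every critical point is
paired: each birth is paired with a canceling saddle and each death with a
canceling saddle.  An elementary concordance is a birth followed (after
isotopy) by a saddle amalgamating the born circle, or a saddle splitting off a
circle that (after isotopy) dies. -/

/-- One step of a concordance. -/
inductive ConcStep : LLC → LLC → Prop
  /-- a virtual isotopy -/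
  | isot {L L' : LLC} (h : Isotopic L L') : ConcStep L L'
  /-- elementary concordance: birth of an unknotted circle (tracked by the
  fresh label `k`), isotopy, then an oriented saddle amalgamating the born
  circle with another component -/
  | birth_saddle {L rest : LLC} (j k : ℕ) (x y : KCode)
      (hk : k ∉ pieceIds L)
      (h : Isotopic ((k, []) :: L) ((j, x) :: (k, y) :: rest)) :
      ConcStep L ((j, x ++ y) :: rest)
  /-- elementary concordance: an oriented saddle splitting off a circle
  (tracked by the fresh label `k`) which after isotopy is an unknotted,
  unlinked circle and dies -/
  | saddle_death {M rest : LLC} (j k : ℕ) (x y : KCode)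
      (hk : k ∉ pieceIds ((j, x ++ y) :: M))
      (h : Isotopic ((j, x) :: (k, y) :: M) ((k, []) :: rest)) :
      ConcStep ((j, x ++ y) :: M) rest

/-- Virtual concordance: genus-zero virtual cobordism. -/
def Concordant : LLC → LLC → Prop := Relation.EqvGen ConcStep

/-- Virtual concordance of knots. -/
def ConcordantK (a b : KCode) : Prop := Concordant [(0, a)] [(0, b)]

/-- The unknot: a circle with no classical crossings. -/
def unknotCode : KCode := []

/-- A virtual knot is (virtually) slice when it is virtually concordant to
the unknot. -/
def SliceK (a : KCode) : Prop := ConcordantK a unknotCode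

/-! ## Seifert circles and faces -/

/-- The position of the other passage of the crossing visited at position `k`. -/
def partnerIdx (a : KCode) (k : ℕ) : ℕ :=
  ((List.range a.length).filter
    (fun j => j != k && (a.getD j default).id == (a.getD k default).id)).headD 0

/-- Traversal of the diagram obtained by the oriented smoothing of every
classical crossing: from the arc entering passage `k+1` one exits along the
arc leaving the partner passage. -/
def seifNext (a : KCode) (k : ℕ) : ℕ := partnerIdx a ((k + 1) % a.length)

/-- A canonical representative of the Seifert circle through arc `k`. -/
def seifRep (a : KCode) (k : ℕ) : ℕ :=
  ((List.range a.length).map (fun t => (seifNext a)^[t] k)).foldr min k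

/-- The number of (virtual) Seifert circles: the number of cycles of the
oriented smoothing of all classical crossings.  A crossingless circle is a
single Seifert circle. -/
def seifertCount (a : KCode) : ℕ :=
  if a.length = 0 then 1 else ((List.range a.length).map (seifRep a)).dedup.length

/-- The counterclockwise-next edge-end around a crossing.  An edge-end is a
pair (position, isIn): the head (`isIn = true`) or the tail (`isIn = false`)
of an arc at the passage at that position. -/
def nextEnd (a : KCode) (e : ℕ × Bool) : ℕ × Bool :=
  let p := a.getD e.1 default
  (partnerIdx a e.1, if p.isOver == (p.sign == 1) then e.2 else !e.2)

/-- The edge-end at which a directed arc (a dart) arrives. -/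
def headEnd (a : KCode) (d : ℕ × Bool) : ℕ × Bool :=
  if d.2 then ((d.1 + 1) % a.length, true) else (d.1, false)

/-- The dart leaving along a given edge-end. -/
def dartFrom (a : KCode) (e : ℕ × Bool) : ℕ × Bool :=
  if e.2 then ((e.1 + a.length - 1) % a.length, false) else (e.1, true)

/-- The face-tracing successor of a dart. -/
def faceNext (a : KCode) (d : ℕ × Bool) : ℕ × Bool :=
  dartFrom a (nextEnd a (headEnd a d))

def encDart (d : ℕ × Bool) : ℕ := 2 * d.1 + (if d.2 then 1 else 0)

/-- A canonical representative of the face through a given dart. -/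
def faceRep (a : KCode) (d : ℕ × Bool) : ℕ :=
  ((List.range (2 * a.length)).map (fun t => encDart ((faceNext a)^[t] d))).foldr
    min (encDart d)

/-- The number of faces of the abstract (ribbon) diagram of a code. -/
def numFaces (a : KCode) : ℕ :=
  (((List.range a.length).flatMap (fun k => [(k, true), (k, false)])).map
    (faceRep a)).dedup.length

/-- A knot code is classical when its underlying abstract diagram is planar,
i.e. (by Euler's formula) when it has `n + 2` faces, `n` being the number of
crossings.  Classical knot diagrams are exactly the virtual knot diagrams
having a realization with no virtual crossings. -/
def IsClassical (a : KCode) : Prop := a = [] ∨ numFaces a = numCross a + 2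

/-! ## Flat diagrams -/

/-- A passage of a flat (no over/under information) virtual knot diagram:
`left = true` when the other strand crosses to the left, so that the affine
label increases by one. -/
structure FlatPassage where
  id : ℕ
  left : Bool
  deriving DecidableEq, Repr

instance : Inhabited FlatPassage := ⟨⟨0, false⟩⟩

/-- The label increment at a flat passage. -/
def FlatPassage.inc (p : FlatPassage) : ℤ := if p.left then 1 else -1

/-- A valid flat knot code: each crossing is traversed exactly twice, once
with increment `+1` and once with increment `-1`. -/
def ValidFlat (a : List FlatPassage) : Prop :=
  ∀ p ∈ a, (a.filter (fun q => q.id == p.id && q.left)).length = 1 ∧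
    (a.filter (fun q => q.id == p.id && !q.left)).length = 1

/-- An affine labeling of a flat knot diagram: `lab k` is the label of the arc
entering the `k`-th passage, and passing a crossing changes the label by the
increment of the passage. -/
def IsFlatLabeling (a : List FlatPassage) (lab : ℕ → ℤ) : Prop :=
  ∀ k, k < a.length → lab ((k + 1) % a.length) = lab k + (a.getD k default).inc

namespace AffPInv

/-- Sum of increments. -/
def S (a : KCode) : ℤ := (a.map Passage.inc).sum

@[simp] lemma S_nil : S [] = 0 := rfl
@[simp] lemma S_cons (p : Passage) (l : KCode) : S (p :: l) = p.inc + S l := rfl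
@[simp] lemma S_append (x y : KCode) : S (x ++ y) = S x + S y := by
  simp [S]

@[simp] lemma labelAt_zero (a : KCode) : labelAt a 0 = 0 := by simp [labelAt]

lemma labelAt_append_le (x y : KCode) {k : ℕ} (h : k ≤ x.length) :
    labelAt (x ++ y) k = labelAt x k := by
  unfold labelAt
  rw [List.take_append_of_le_length h]

lemma labelAt_length (x : KCode) : labelAt x x.length = S x := by
  simp [labelAt, S]

lemma labelAt_append_add (x y : KCode) (k : ℕ) :
    labelAt (x ++ y) (x.length + k) = S x + labelAt y k := by
  unfold labelAt
  rw [List.take_append]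
  simp [S, List.take_of_length_le]

lemma getD_append_add (x y : KCode) (m : ℕ) :
    (x ++ y).getD (x.length + m) default = y.getD m default := by
  rw [List.getD_append_right _ _ _ _ (Nat.le_add_right _ _)]
  simp

lemma labelAt_cons_one (p : Passage) (l : KCode) : labelAt (p :: l) 1 = p.inc := by
  simp [labelAt]

lemma getD_lt_mem {a : KCode} {k : ℕ} (h : k < a.length) : a.getD k default ∈ a := by
  rw [List.getD_eq_getElem _ _ h]; exact List.getElem_mem _

lemma findIdx_unique {l : List Passage} {P : Passage → Bool} {m : ℕ}
    (hm : m < l.length) (hPm : P (l.getD m default) = true)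
    (huniq : (l.filter P).length ≤ 1) : l.findIdx P = m := by
  induction l generalizing m with
  | nil => simp at hm
  | cons x t ih =>
    by_cases hx : P x
    · cases m with
      | zero => simp [List.findIdx_cons, hx]
      | succ m =>
        exfalso
        simp only [List.length_cons, Nat.succ_lt_succ_iff] at hm
        simp only [List.getD_cons_succ] at hPm
        have hmem : t.getD m default ∈ t.filter P :=
          List.mem_filter.2 ⟨getD_lt_mem hm, hPm⟩
        rw [List.filter_cons_of_pos hx] at huniq
        simp only [List.length_cons] at huniq
        have : t.filter P = [] := List.length_eq_zero_iff.mp (by omega)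
        rw [this] at hmem; simp at hmem
    · cases m with
      | zero => simp [List.getD] at hPm; simp [hPm] at hx
      | succ m =>
        simp only [List.length_cons, Nat.succ_lt_succ_iff] at hm
        simp only [List.getD_cons_succ] at hPm
        rw [List.filter_cons_of_neg hx] at huniq
        rw [List.findIdx_cons]
        simp [hx, ih hm hPm huniq]

lemma mem_crossIds {a : KCode} {i : ℕ} : i ∈ crossIds a ↔ ∃ p ∈ a, p.id = i := by
  simp [crossIds, List.mem_dedup, List.mem_map]

lemma sgn_eq {a : KCode} (hva : ValidK a) {p : Passage} (hp : p ∈ a) :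
    sgn a p.id = p.sign := by
  unfold sgn
  rcases hfind : a.find? (fun q => q.id == p.id) with _ | q
  · exfalso
    exact List.find?_eq_none.mp hfind p hp (by simp)
  · have hq : q ∈ a := List.mem_of_find?_eq_some hfind
    have hqid : q.id = p.id := by
      have := List.find?_some hfind; simpa using this
    have := (hva p hp).2.2.2 q hq hqid
    rw [hfind]; simp [this]

lemma validK_perm {a b : KCode} (h : a.Perm b) (hva : ValidK a) : ValidK b := by
  intro p hp
  have hpa : p ∈ a := h.symm.subset hp
  obtain ⟨h1, h2, h3, h4⟩ := hva p hpa
  refine ⟨h1, ?_, ?_, ?_⟩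
  · rw [← (h.filter _).length_eq]; exact h2
  · rw [← (h.filter _).length_eq]; exact h3
  · intro q hq hqi; exact h4 q (h.symm.subset hq) hqi

end AffPInv
namespace AffPInv

lemma sum_split (l : List Passage) (P : Passage → Bool) (f : Passage → ℤ) :
    ((l.filter P).map f).sum + ((l.filter (fun q => !P q)).map f).sum = (l.map f).sum := by
  induction l with
  | nil => simp
  | cons x t ih =>
    by_cases h : P x <;> simp [h, ← ih] <;> ring

lemma sum_map_neg {α : Type*} (l : List α) (f : α → ℤ) :
    (l.map (fun x => -(f x))).sum = -((l.map f).sum) := by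
  induction l with
  | nil => simp
  | cons x t ih => simp [ih]; ring

lemma countP_id_filter (a : KCode) (i : ℕ) (o : Bool) :
    List.countP (fun q => q.id == i) (a.filter (fun q => q.isOver == o))
      = (a.filter (fun q => (q.id == i) && (q.isOver == o))).length := by
  rw [List.countP_filter, List.countP_eq_length_filter]

/-- The ids of passages on a given side (over/under) of a valid code enumerate
`crossIds` without repetition. -/
lemma side_ids_perm {a : KCode} (hva : ValidK a) (o : Bool) :
    ((a.filter (fun q => q.isOver == o)).map Passage.id).Perm (crossIds a) := by
  have hcount : ∀ i, List.countP (fun q => q.id == i) (a.filter (fun q => q.isOver == o)) ≤ 1 := by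
    intro i
    rw [countP_id_filter]
    by_cases hex : ∃ p ∈ a, p.id = i ∧ p.isOver = o
    · obtain ⟨p, hp, hpi, hpo⟩ := hex
      have h2 := hva p hp
      subst hpi
      cases o
      · refine le_of_eq ?_
        calc (a.filter fun q => (q.id == p.id) && (q.isOver == false)).length
            = (a.filter fun q => (q.id == p.id) && !q.isOver).length := by
              congr 1; apply List.filter_congr; intros; simp
          _ = 1 := h2.2.2.1
      · refine le_of_eq ?_
        calc (a.filter fun q => (q.id == p.id) && (q.isOver == true)).length
            = (a.filter fun q => (q.id == p.id) && q.isOver).length := by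
              congr 1; apply List.filter_congr; intros; simp
          _ = 1 := h2.2.1
    · push_neg at hex
      have hnil : (a.filter fun q => (q.id == i) && (q.isOver == o)) = [] := by
        rw [List.filter_eq_nil_iff]
        intro q hq hcon
        simp only [Bool.and_eq_true, beq_iff_eq] at hcon
        exact hex q hq hcon.1 hcon.2
      simp [hnil]
  have hnd : ((a.filter (fun q => q.isOver == o)).map Passage.id).Nodup := by
    rw [List.nodup_iff_count_le_one]
    intro i
    rw [List.count_eq_countP, List.countP_map]
    exact hcount i
  have hnd2 : (crossIds a).Nodup := List.nodup_dedup _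
  apply (List.perm_ext_iff_of_nodup hnd hnd2).mpr
  intro i
  simp only [List.mem_map, List.mem_filter, mem_crossIds, beq_iff_eq]
  constructor
  · rintro ⟨q, ⟨hq, _⟩, rfl⟩; exact ⟨q, hq, rfl⟩
  · rintro ⟨p, hp, rfl⟩
    have h2 := hva p hp
    have hne : (a.filter fun q => (q.id == p.id) && (q.isOver == o)) ≠ [] := by
      apply List.length_pos_iff.mp
      cases o
      · have : (a.filter fun q => (q.id == p.id) && (q.isOver == false)).length
            = (a.filter fun q => (q.id == p.id) && !q.isOver).length := by
          congr 1; apply List.filter_congr; intros; simp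
        rw [this, h2.2.2.1]; omega
      · have : (a.filter fun q => (q.id == p.id) && (q.isOver == true)).length
            = (a.filter fun q => (q.id == p.id) && q.isOver).length := by
          congr 1; apply List.filter_congr; intros; simp
        rw [this, h2.2.1]; omega
    obtain ⟨q, hq⟩ := List.exists_mem_of_ne_nil _ hne
    have hq' := List.mem_filter.mp hq
    have hqq : q.id = p.id ∧ q.isOver = o := by
      have := hq'.2; simp at this; exact this
    exact ⟨q, ⟨hq'.1, by simp [hqq.2]⟩, hqq.1⟩

lemma S_eq_zero {a : KCode} (hva : ValidK a) : S a = 0 := by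
  have hsplit := sum_split a (fun q => q.isOver == true) Passage.inc
  have hov : ((a.filter (fun q => q.isOver == true)).map Passage.inc).sum
      = -(((a.filter (fun q => q.isOver == true)).map Passage.id).map (sgn a)).sum := by
    rw [List.map_map]
    have : (a.filter (fun q => q.isOver == true)).map Passage.inc
        = (a.filter (fun q => q.isOver == true)).map (fun q => -((sgn a ∘ Passage.id) q)) := by
      apply List.map_congr_left
      intro q hq
      have hqa := List.mem_filter.mp hq
      have ho : q.isOver = true := by simpa using hqa.2
      simp [Passage.inc, ho, Function.comp, sgn_eq hva hqa.1]
    rw [this, sum_map_neg]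
  have hun : ((a.filter (fun q => !(q.isOver == true))).map Passage.inc).sum
      = (((a.filter (fun q => q.isOver == false)).map Passage.id).map (sgn a)).sum := by
    have hfe : a.filter (fun q => !(q.isOver == true)) = a.filter (fun q => q.isOver == false) := by
      apply List.filter_congr; intro q _; cases h : q.isOver <;> simp
    rw [hfe, List.map_map]
    apply congrArg List.sum
    apply List.map_congr_left
    intro q hq
    have hqa := List.mem_filter.mp hq
    have ho : q.isOver = false := by simpa using hqa.2
    simp [Passage.inc, ho, Function.comp, sgn_eq hva hqa.1]
  have hpo := ((side_ids_perm hva true).map (sgn a)).sum_eq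
  have hpu := ((side_ids_perm hva false).map (sgn a)).sum_eq
  have hS : S a = (a.map Passage.inc).sum := rfl
  rw [hS, ← hsplit, hov, hun, hpo, hpu]
  ring

end AffPInv
namespace AffPInv

/-- Locate the over/under passages and the sign of a crossing in a valid code. -/
lemma corr {b : KCode} (hvb : ValidK b) {i : ℕ} {mo mu : ℕ} {po pu : Passage}
    (hmo : mo < b.length) (hmu : mu < b.length)
    (hpo : b.getD mo default = po) (hpu : b.getD mu default = pu)
    (hpoid : po.id = i) (hpoov : po.isOver = true)
    (hpuid : pu.id = i) (hpuov : pu.isOver = false) :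
    overPos b i = mo ∧ underPos b i = mu ∧ sgn b i = po.sign := by
  have hpob : po ∈ b := hpo ▸ getD_lt_mem hmo
  have hpub : pu ∈ b := hpu ▸ getD_lt_mem hmu
  have h2 := hvb po hpob
  refine ⟨?_, ?_, ?_⟩
  · apply findIdx_unique hmo
    · rw [hpo]; simp [hpoid, hpoov]
    · refine le_of_eq ?_
      rw [← h2.2.1]; congr 1
      apply List.filter_congr; intro q _; rw [hpoid]
  · apply findIdx_unique hmu
    · rw [hpu]; simp [hpuid, hpuov]
    · refine le_of_eq ?_
      rw [← h2.2.2.1]; congr 1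
      apply List.filter_congr; intro q _; rw [hpoid]
  · rw [← hpoid]; exact sgn_eq hvb hpob

/-- Produce the over- and under-passage positions of a crossing of a valid code. -/
lemma exists_pos {a : KCode} (hva : ValidK a) {i : ℕ} (hi : i ∈ crossIds a) :
    ∃ ko ku : ℕ, ∃ po pu : Passage, ko < a.length ∧ ku < a.length ∧
      a.getD ko default = po ∧ a.getD ku default = pu ∧
      po.id = i ∧ po.isOver = true ∧ pu.id = i ∧ pu.isOver = false ∧
      pu.sign = po.sign ∧ (po.sign = 1 ∨ po.sign = -1) := by
  obtain ⟨p, hp, hpi⟩ := mem_crossIds.mp hi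
  have h2 := hva p hp
  have hone : (a.filter (fun q => q.id == p.id && q.isOver)) ≠ [] :=
    List.length_pos_iff.mp (by rw [h2.2.1]; omega)
  have huone : (a.filter (fun q => q.id == p.id && !q.isOver)) ≠ [] :=
    List.length_pos_iff.mp (by rw [h2.2.2.1]; omega)
  obtain ⟨po, hpo⟩ := List.exists_mem_of_ne_nil _ hone
  obtain ⟨pu, hpu⟩ := List.exists_mem_of_ne_nil _ huone
  have hpo' := List.mem_filter.mp hpo
  have hpu' := List.mem_filter.mp hpu
  have hpo2 : po.id = p.id ∧ po.isOver = true := by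
    have := hpo'.2; simp at this; exact ⟨this.1, this.2⟩
  have hpu2 : pu.id = p.id ∧ pu.isOver = false := by
    have := hpu'.2; simp at this; exact ⟨this.1, this.2⟩
  obtain ⟨ko, hko, hgko⟩ := List.getElem_of_mem hpo'.1
  obtain ⟨ku, hku, hgku⟩ := List.getElem_of_mem hpu'.1
  refine ⟨ko, ku, po, pu, hko, hku, ?_, ?_, hpi ▸ hpo2.1, hpo2.2, hpi ▸ hpu2.1, hpu2.2, ?_, ?_⟩
  · rw [List.getD_eq_getElem _ _ hko]; exact hgko
  · rw [List.getD_eq_getElem _ _ hku]; exact hgku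
  · rw [h2.2.2.2 pu hpu'.1 hpu2.1, h2.2.2.2 po hpo'.1 hpo2.1]
  · rw [h2.2.2.2 po hpo'.1 hpo2.1]; exact h2.1

open LaurentPolynomial in
/-- Master comparison lemma: if the crossings of `b` are those of `a` plus some
extra list, with signs and weights agreeing on the common part, the affine index
polynomials differ by the sum over the extra crossings. -/
lemma affP_split (a b : KCode) (ex : List ℕ)
    (hnd : (crossIds a ++ ex).Nodup)
    (hmem : ∀ n, n ∈ crossIds b ↔ (n ∈ crossIds a ∨ n ∈ ex))
    (hterm : ∀ n ∈ crossIds a, sgn b n = sgn a n ∧ wt b n = wt a n) :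
    affP b = affP a + (ex.map (fun n => (C (sgn b n)) * (T (wt b n) - 1))).sum := by
  have hndb : (crossIds b).Nodup := List.nodup_dedup _
  have hperm : (crossIds b).Perm (crossIds a ++ ex) := by
    apply (List.perm_ext_iff_of_nodup hndb hnd).mpr
    intro n; rw [hmem]; simp
  unfold affP
  rw [(hperm.map _).sum_eq, List.map_append, List.sum_append]
  congr 1
  apply congrArg List.sum
  apply List.map_congr_left
  intro n hn
  rw [(hterm n hn).1, (hterm n hn).2]

/-- Validity splits across an id-disjoint decomposition. -/
lemma validK_append_disjoint {a k : KCode}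
    (hdisj : ∀ p ∈ a, ∀ q ∈ k, p.id ≠ q.id) :
    ValidK (a ++ k) ↔ (ValidK a ∧ ValidK k) := by
  have hfa : ∀ p ∈ a, ∀ o : Bool,
      (k.filter (fun q => q.id == p.id && (q.isOver == o))) = [] := by
    intro p hp o
    rw [List.filter_eq_nil_iff]
    intro q hq hcon
    simp only [Bool.and_eq_true, beq_iff_eq] at hcon
    exact hdisj p hp q hq hcon.1.symm
  have hfk : ∀ p ∈ k, ∀ o : Bool,
      (a.filter (fun q => q.id == p.id && (q.isOver == o))) = [] := by
    intro p hp o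
    rw [List.filter_eq_nil_iff]
    intro q hq hcon
    simp only [Bool.and_eq_true, beq_iff_eq] at hcon
    exact hdisj q hq p hp hcon.1
  have convT : ∀ l : KCode, ∀ n : ℕ, l.filter (fun q => q.id == n && q.isOver)
      = l.filter (fun q => q.id == n && (q.isOver == true)) := by
    intro l n; apply List.filter_congr; intros; simp
  have convF : ∀ l : KCode, ∀ n : ℕ, l.filter (fun q => q.id == n && !q.isOver)
      = l.filter (fun q => q.id == n && (q.isOver == false)) := by
    intro l n; apply List.filter_congr; intros; simp
  constructor
  · intro h
    constructor
    · intro p hp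
      obtain ⟨h1, h2, h3, h4⟩ := h p (by simp [hp])
      rw [List.filter_append, convT, convT, hfa p hp true, List.append_nil, ← convT] at h2
      rw [List.filter_append, convF, convF, hfa p hp false, List.append_nil, ← convF] at h3
      exact ⟨h1, h2, h3, fun q hq hqi => h4 q (by simp [hq]) hqi⟩
    · intro p hp
      obtain ⟨h1, h2, h3, h4⟩ := h p (by simp [hp])
      rw [List.filter_append, convT, convT, hfk p hp true, List.nil_append, ← convT] at h2
      rw [List.filter_append, convF, convF, hfk p hp false, List.nil_append, ← convF] at h3
      exact ⟨h1, h2, h3, fun q hq hqi => h4 q (by simp [hq]) hqi⟩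
  · rintro ⟨ha, hk⟩ p hp
    rw [List.mem_append] at hp
    rcases hp with hp | hp
    · obtain ⟨h1, h2, h3, h4⟩ := ha p hp
      refine ⟨h1, ?_, ?_, ?_⟩
      · rw [List.filter_append, convT k p.id, hfa p hp true, List.append_nil]; exact h2
      · rw [List.filter_append, convF k p.id, hfa p hp false, List.append_nil]; exact h3
      · intro q hq hqi
        rw [List.mem_append] at hq
        rcases hq with hq | hq
        · exact h4 q hq hqi
        · exact absurd hqi (hdisj p hp q hq).symm.elim
    · obtain ⟨h1, h2, h3, h4⟩ := hk p hp
      refine ⟨h1, ?_, ?_, ?_⟩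
      · rw [List.filter_append, convT a p.id, hfk p hp true, List.nil_append]; exact h2
      · rw [List.filter_append, convF a p.id, hfk p hp false, List.nil_append]; exact h3
      · intro q hq hqi
        rw [List.mem_append] at hq
        rcases hq with hq | hq
        · exact absurd hqi.symm (hdisj q hq p hp).symm.elim
        · exact h4 q hq hqi
  
end AffPInv
namespace AffPInv

/-- Transfer of sign and weight along a label-preserving (up to constant)
position correspondence. -/
lemma wt_sgn_eq_of_map {a b : KCode} (hva : ValidK a) (hvb : ValidK b)
    {n : ℕ} (hn : n ∈ crossIds a) (d : ℤ)
    (hmap : ∀ k < a.length, (a.getD k default).id = n →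
      ∃ k', k' < b.length ∧ b.getD k' default = a.getD k default ∧
        labelAt b k' = labelAt a k + d) :
    sgn b n = sgn a n ∧ wt b n = wt a n := by
  obtain ⟨ko, ku, po, pu, hko, hku, hgo, hgu, hpoid, hpoov, hpuid, hpuov, hsig, hs1⟩ :=
    exists_pos hva hn
  obtain ⟨ko', hko', hgo', hlo⟩ := hmap ko hko (by rw [hgo, hpoid])
  obtain ⟨ku', hku', hgu', hlu⟩ := hmap ku hku (by rw [hgu, hpuid])
  rw [hgo] at hgo'; rw [hgu] at hgu'
  have ca := corr hva hko hku hgo hgu hpoid hpoov hpuid hpuov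
  have cb := corr hvb hko' hku' hgo' hgu' hpoid hpoov hpuid hpuov
  constructor
  · rw [cb.2.2, ca.2.2]
  · unfold wt
    rw [ca.1, ca.2.1, cb.1, cb.2.1, ca.2.2, cb.2.2, hlo, hlu]
    ring

lemma crossIds_perm {a b : KCode} (h : a.Perm b) : ∀ n, n ∈ crossIds a ↔ n ∈ crossIds b := by
  intro n
  simp only [mem_crossIds]
  constructor
  · rintro ⟨p, hp, rfl⟩; exact ⟨p, h.subset hp, rfl⟩
  · rintro ⟨p, hp, rfl⟩; exact ⟨p, h.symm.subset hp, rfl⟩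

/-- Invariance of the affine index polynomial under rotation of the base point. -/
lemma rotate_aff {x y : KCode} (hva : ValidK (x ++ y)) (hvb : ValidK (y ++ x)) :
    affP (y ++ x) = affP (x ++ y) := by
  have hS : S x + S y = 0 := by
    have := S_eq_zero hva; rwa [S_append] at this
  have hmap : ∀ k < (x ++ y).length, ∃ k', k' < (y ++ x).length ∧
      (y ++ x).getD k' default = (x ++ y).getD k default ∧
      labelAt (y ++ x) k' = labelAt (x ++ y) k + S y := by
    intro k hk
    rcases lt_or_ge k x.length with h | h
    · refine ⟨y.length + k, ?_, ?_, ?_⟩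
      · simp only [List.length_append]; omega
      · rw [getD_append_add, List.getD_append _ _ _ _ h]
      · rw [labelAt_append_add, labelAt_append_le _ _ (le_of_lt h)]; ring
    · simp only [List.length_append] at hk
      obtain ⟨m, rfl⟩ : ∃ m, k = x.length + m := ⟨k - x.length, by omega⟩
      have hm : m < y.length := by omega
      refine ⟨m, ?_, ?_, ?_⟩
      · simp only [List.length_append]; omega
      · rw [getD_append_add, List.getD_append _ _ _ _ hm]
      · rw [labelAt_append_add, labelAt_append_le _ _ (le_of_lt hm)]
        omega
  have hsplit := affP_split (x ++ y) (y ++ x) []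
    (by rw [List.append_nil]; exact List.nodup_dedup _)
    (by intro n; simpa using (crossIds_perm List.perm_append_comm n).symm)
    (by
      intro n hn
      exact wt_sgn_eq_of_map hva hvb hn (S y) (fun k hk _ => hmap k hk))
  simpa using hsplit

/-- Relabelling of a single passage. -/
def rp (f : ℕ → ℕ) (p : Passage) : Passage := { p with id := f p.id }

lemma relabel_eq_map (f : ℕ → ℕ) (a : KCode) : relabel f a = a.map (rp f) := rfl

@[simp] lemma rp_inc (f : ℕ → ℕ) (p : Passage) : (rp f p).inc = p.inc := by
  rfl

lemma labelAt_relabel (f : ℕ → ℕ) (a : KCode) (k : ℕ) :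
    labelAt (relabel f a) k = labelAt a k := by
  unfold labelAt
  rw [relabel_eq_map, ← List.map_take, List.map_map]
  congr 1

lemma validK_relabel {f : ℕ → ℕ} (hf : Function.Injective f) (a : KCode) :
    ValidK (relabel f a) ↔ ValidK a := by
  have hpred : ∀ (n : ℕ) (o : Bool), ∀ q : Passage,
      ((rp f q).id == f n && ((rp f q).isOver == o)) = (q.id == n && (q.isOver == o)) := by
    intro n o q
    by_cases h : q.id = n
    · simp [rp, h]
    · have h2 : f q.id ≠ f n := fun hh => h (hf hh)
      rw [show ((rp f q).id == f n) = false from by simp [rp]; exact h2,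
        show (q.id == n) = false from by simp; exact h]
      simp
  have hfilter : ∀ (n : ℕ) (o : Bool),
      (relabel f a).filter (fun q => q.id == f n && (q.isOver == o))
        = (a.filter (fun q => q.id == n && (q.isOver == o))).map (rp f) := by
    intro n o
    rw [relabel_eq_map, List.filter_map]
    congr 1
    apply List.filter_congr
    intro q _
    exact hpred n o q
  have convT : ∀ l : KCode, ∀ n : ℕ, l.filter (fun q => q.id == n && q.isOver)
      = l.filter (fun q => q.id == n && (q.isOver == true)) := by
    intro l n; apply List.filter_congr; intros; simp
  have convF : ∀ l : KCode, ∀ n : ℕ, l.filter (fun q => q.id == n && !q.isOver)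
      = l.filter (fun q => q.id == n && (q.isOver == false)) := by
    intro l n; apply List.filter_congr; intros; simp
  constructor
  · intro h p hp
    obtain ⟨h1, h2, h3, h4⟩ := h (rp f p) (by rw [relabel_eq_map]; exact List.mem_map_of_mem hp)
    refine ⟨h1, ?_, ?_, ?_⟩
    · rw [convT] at h2 ⊢
      have := hfilter p.id true
      rw [show (rp f p).id = f p.id from rfl, this, List.length_map] at h2
      exact h2
    · rw [convF] at h3 ⊢
      have := hfilter p.id false
      rw [show (rp f p).id = f p.id from rfl, this, List.length_map] at h3
      exact h3
    · intro q hq hqi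
      exact h4 (rp f q) (by rw [relabel_eq_map]; exact List.mem_map_of_mem hq)
        (by simp [rp, hqi])
  · intro h p' hp'
    rw [relabel_eq_map] at hp'
    obtain ⟨p, hp, rfl⟩ := List.mem_map.mp hp'
    obtain ⟨h1, h2, h3, h4⟩ := h p hp
    refine ⟨h1, ?_, ?_, ?_⟩
    · rw [convT, show (rp f p).id = f p.id from rfl, hfilter p.id true, List.length_map,
        ← convT]
      exact h2
    · rw [convF, show (rp f p).id = f p.id from rfl, hfilter p.id false, List.length_map,
        ← convF]
      exact h3
    · intro q' hq' hqi'
      rw [relabel_eq_map] at hq'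
      obtain ⟨q, hq, rfl⟩ := List.mem_map.mp hq'
      have : q.id = p.id := hf hqi'
      exact h4 q hq this

open LaurentPolynomial in
/-- Invariance of the affine index polynomial under injective renaming. -/
lemma relabel_aff {f : ℕ → ℕ} (hf : Function.Injective f) (a : KCode)
    (hva : ValidK a) : affP (relabel f a) = affP a := by
  have hvb : ValidK (relabel f a) := (validK_relabel hf a).mpr hva
  have hlen : (relabel f a).length = a.length := by rw [relabel_eq_map, List.length_map]
  have hget : ∀ k, k < a.length → (relabel f a).getD k default = rp f (a.getD k default) := by
    intro k hk
    rw [relabel_eq_map, List.getD_eq_getElem _ _ (by simpa using hk),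
      List.getD_eq_getElem _ _ hk]
    exact List.getElem_map _
  -- crossing data
  have hterm : ∀ n ∈ crossIds a, sgn (relabel f a) (f n) = sgn a n ∧ wt (relabel f a) (f n) = wt a n := by
    intro n hn
    obtain ⟨ko, ku, po, pu, hko, hku, hgo, hgu, hpoid, hpoov, hpuid, hpuov, hsig, hs1⟩ :=
      exists_pos hva hn
    have ca := corr hva hko hku hgo hgu hpoid hpoov hpuid hpuov
    have cb := corr hvb (i := f n) (mo := ko) (mu := ku) (po := rp f po) (pu := rp f pu)
      (by omega) (by omega) (by rw [hget ko hko, hgo]) (by rw [hget ku hku, hgu])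
      (by simp [rp, hpoid]) (by simp [rp]; exact hpoov) (by simp [rp, hpuid])
      (by simp [rp]; exact hpuov)
    constructor
    · rw [cb.2.2, ca.2.2]; rfl
    · unfold wt
      rw [ca.1, ca.2.1, cb.1, cb.2.1, ca.2.2, cb.2.2]
      rw [labelAt_relabel, labelAt_relabel]
      rfl
  -- crossIds of b
  have hmemb : ∀ m, m ∈ crossIds (relabel f a) ↔ m ∈ (crossIds a).map f := by
    intro m
    constructor
    · intro hm
      obtain ⟨p', hp', rfl⟩ := mem_crossIds.mp hm
      rw [relabel_eq_map] at hp'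
      obtain ⟨p, hp, rfl⟩ := List.mem_map.mp hp'
      exact List.mem_map.mpr ⟨p.id, mem_crossIds.mpr ⟨p, hp, rfl⟩, rfl⟩
    · intro hm
      obtain ⟨n, hn, rfl⟩ := List.mem_map.mp hm
      obtain ⟨p, hp, rfl⟩ := mem_crossIds.mp hn
      exact mem_crossIds.mpr ⟨rp f p, by rw [relabel_eq_map]; exact List.mem_map_of_mem hp, rfl⟩
  have hperm : (crossIds (relabel f a)).Perm ((crossIds a).map f) := by
    apply (List.perm_ext_iff_of_nodup (List.nodup_dedup _) ?_).mpr hmemb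
    exact (List.nodup_dedup _).map (fun _ _ h => hf h)
  unfold affP
  rw [(hperm.map _).sum_eq, List.map_map]
  apply congrArg List.sum
  apply List.map_congr_left
  intro n hn
  simp only [Function.comp]
  rw [(hterm n hn).1, (hterm n hn).2]

end AffPInv
namespace AffPInv

lemma replC_nil_nil {c c' : KCode} (h : ReplC c c' [] []) : c = c' := by
  cases h; rfl

lemma replC_one {c c' : KCode} {u v : KCode} (h : ReplC c c' [(u, v)] []) :
    ∃ x y, c = x ++ u ++ y ∧ c' = x ++ v ++ y := by
  cases h with
  | cons x u v h' =>
    cases h'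
    exact ⟨x, _, rfl, rfl⟩

lemma replC_two {c c' : KCode} {u1 v1 u2 v2 : KCode}
    (h : ReplC c c' [(u1, v1), (u2, v2)] []) :
    ∃ x y z, c = x ++ u1 ++ (y ++ u2 ++ z) ∧ c' = x ++ v1 ++ (y ++ v2 ++ z) := by
  cases h with
  | cons x u v h' =>
    obtain ⟨y, z, hy, hz⟩ := replC_one h'
    exact ⟨x, y, z, by rw [hy], by rw [hz]⟩

lemma replC_three {c c' : KCode} {u1 v1 u2 v2 u3 v3 : KCode}
    (h : ReplC c c' [(u1, v1), (u2, v2), (u3, v3)] []) :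
    ∃ x y z w, c = x ++ u1 ++ (y ++ u2 ++ (z ++ u3 ++ w)) ∧
      c' = x ++ v1 ++ (y ++ v2 ++ (z ++ v3 ++ w)) := by
  cases h with
  | cons x u v h' =>
    obtain ⟨y, z, w, hy, hz⟩ := replC_two h'
    exact ⟨x, y, z, w, by rw [hy], by rw [hz]⟩

lemma replL_singleton {k : ℕ} {c : KCode} {L' : LLC} {segs : List (KCode × KCode)}
    (h : ReplL [(k, c)] L' segs) :
    ∃ c', L' = [(k, c')] ∧ ReplC c c' segs [] := by
  cases h with
  | cons k hC hL => cases hL; exact ⟨_, rfl, hC⟩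

lemma replL_singleton' {L : LLC} {k : ℕ} {c' : KCode} {segs : List (KCode × KCode)}
    (h : ReplL L [(k, c')] segs) :
    ∃ c, L = [(k, c)] ∧ ReplC c c' segs [] := by
  cases h with
  | cons k hC hL => cases hL; exact ⟨_, rfl, hC⟩

lemma idsOf_singleton (k : ℕ) (c : KCode) : ∀ n, n ∈ idsOf [(k, c)] ↔ n ∈ crossIds c := by
  intro n
  simp only [idsOf, crossIdsL, plainL]
  show n ∈ crossIds ([c].flatten) ↔ _
  have h : ([c] : List KCode).flatten = c := by simp
  rw [h]

/-- The R1 kink is a valid code on its own. -/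
lemma validK_kink (i : ℕ) (o : Bool) (s : ℤ) (hs : s = 1 ∨ s = -1) :
    ValidK [⟨i, o, s⟩, ⟨i, !o, s⟩] := by
  intro p hp
  simp only [List.mem_cons, List.not_mem_nil, or_false] at hp
  have hfour : ∀ q ∈ ([⟨i, o, s⟩, ⟨i, !o, s⟩] : KCode), q.id = p.id → q.sign = p.sign := by
    intro q hq _
    simp only [List.mem_cons, List.not_mem_nil, or_false] at hq
    rcases hq with rfl | rfl <;> rcases hp with rfl | rfl <;> rfl
  rcases hp with rfl | rfl <;> cases o <;>
    refine ⟨hs, ?_, ?_, hfour⟩ <;> simp [List.filter]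

/-- Validity transfer for the first Reidemeister move. -/
lemma validK_r1 {x y : KCode} (i : ℕ) (o : Bool) (s : ℤ) (hs : s = 1 ∨ s = -1)
    (hi : i ∉ crossIds (x ++ y)) :
    ValidK (x ++ (([⟨i, o, s⟩, ⟨i, !o, s⟩] : KCode) ++ y)) ↔ ValidK (x ++ y) := by
  have hperm : (x ++ (([⟨i, o, s⟩, ⟨i, !o, s⟩] : KCode) ++ y)).Perm
      ((x ++ y) ++ [⟨i, o, s⟩, ⟨i, !o, s⟩]) := by
    rw [← Multiset.coe_eq_coe]
    simp only [← Multiset.coe_add]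
    abel
  have hdisj : ∀ p ∈ x ++ y, ∀ q ∈ ([⟨i, o, s⟩, ⟨i, !o, s⟩] : KCode), p.id ≠ q.id := by
    intro p hp q hq
    have hqi : q.id = i := by
      simp only [List.mem_cons, List.not_mem_nil, or_false] at hq
      rcases hq with rfl | rfl <;> rfl
    rw [hqi]
    intro hcon
    exact hi (mem_crossIds.mpr ⟨p, hp, hcon⟩)
  constructor
  · intro h
    exact ((validK_append_disjoint hdisj).mp (validK_perm hperm h)).1
  · intro h
    apply validK_perm hperm.symm
    exact (validK_append_disjoint hdisj).mpr ⟨h, validK_kink i o s hs⟩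

open LaurentPolynomial in
/-- Invariance of the affine index polynomial under the first Reidemeister move. -/
lemma r1_aff {x y : KCode} (i : ℕ) (o : Bool) (s : ℤ) (hs : s = 1 ∨ s = -1)
    (hi : i ∉ crossIds (x ++ y))
    (hva : ValidK (x ++ y)) (hvb : ValidK (x ++ (([⟨i, o, s⟩, ⟨i, !o, s⟩] : KCode) ++ y))) :
    affP (x ++ (([⟨i, o, s⟩, ⟨i, !o, s⟩] : KCode) ++ y)) = affP (x ++ y) := by
  set v : KCode := [⟨i, o, s⟩, ⟨i, !o, s⟩] with hv
  have hvlen : v.length = 2 := by rw [hv]; rfl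
  have hSv : S v = 0 := by rw [hv]; cases o <;> simp [Passage.inc]
  have hblen : (x ++ (v ++ y)).length = x.length + 2 + y.length := by
    simp only [List.length_append, hvlen]; omega
  have hmap : ∀ k < (x ++ y).length, ∃ k', k' < (x ++ (v ++ y)).length ∧
      (x ++ (v ++ y)).getD k' default = (x ++ y).getD k default ∧
      labelAt (x ++ (v ++ y)) k' = labelAt (x ++ y) k + 0 := by
    intro k hk
    rcases lt_or_ge k x.length with h | h
    · refine ⟨k, by rw [hblen]; omega, ?_, ?_⟩
      · rw [List.getD_append _ _ _ _ h, List.getD_append _ _ _ _ h]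
      · rw [labelAt_append_le _ _ (le_of_lt h), labelAt_append_le _ _ (le_of_lt h)]; ring
    · simp only [List.length_append] at hk
      obtain ⟨m, rfl⟩ : ∃ m, k = x.length + m := ⟨k - x.length, by omega⟩
      have hm : m < y.length := by omega
      refine ⟨x.length + (v.length + m), by rw [hblen, hvlen]; omega, ?_, ?_⟩
      · rw [getD_append_add, getD_append_add, getD_append_add]
      · rw [labelAt_append_add, labelAt_append_add, labelAt_append_add, hSv]
        ring
  have hlab0 : labelAt (x ++ (v ++ y)) x.length = S x := by
    rw [labelAt_append_le _ _ (le_refl _), labelAt_length]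
  have hlab1 : labelAt (x ++ (v ++ y)) (x.length + 1) = S x + Passage.inc ⟨i, o, s⟩ := by
    rw [labelAt_append_add]
    congr 1
    rw [hv]
    exact labelAt_cons_one _ _
  have hget0 : (x ++ (v ++ y)).getD x.length default = ⟨i, o, s⟩ := by
    have := getD_append_add x (v ++ y) 0
    rw [Nat.add_zero] at this
    rw [this, hv]
    rfl
  have hget1 : (x ++ (v ++ y)).getD (x.length + 1) default = ⟨i, !o, s⟩ := by
    rw [getD_append_add, hv]
    rfl
  have hnew : sgn (x ++ (v ++ y)) i = s ∧ wt (x ++ (v ++ y)) i = 0 := by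
    cases o
    · have cb := corr hvb (i := i) (mo := x.length + 1) (mu := x.length)
        (po := ⟨i, !false, s⟩) (pu := ⟨i, false, s⟩)
        (by rw [hblen]; omega) (by rw [hblen]; omega) hget1 hget0 rfl rfl rfl rfl
      refine ⟨by rw [cb.2.2], ?_⟩
      unfold wt
      rw [cb.1, cb.2.1, cb.2.2, hlab0, hlab1]
      simp [Passage.inc]
    · have cb := corr hvb (i := i) (mo := x.length) (mu := x.length + 1)
        (po := ⟨i, true, s⟩) (pu := ⟨i, !true, s⟩)
        (by rw [hblen]; omega) (by rw [hblen]; omega) hget0 hget1 rfl rfl rfl rfl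
      refine ⟨by rw [cb.2.2], ?_⟩
      unfold wt
      rw [cb.1, cb.2.1, cb.2.2, hlab0, hlab1]
      simp [Passage.inc]
  have hvmem : ∀ p ∈ v, p.id = i := by
    intro p hp
    rw [hv] at hp
    simp only [List.mem_cons, List.not_mem_nil, or_false] at hp
    rcases hp with rfl | rfl <;> rfl
  have hsplit := affP_split (x ++ y) (x ++ (v ++ y)) [i]
    (by
      rw [List.nodup_append]
      exact ⟨List.nodup_dedup _, List.nodup_singleton _, by
        intro n hn m hm hnm
        rw [List.mem_singleton] at hm
        rw [hnm, hm] at hn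
        exact hi hn⟩)
    (by
      intro n
      simp only [mem_crossIds, List.mem_append, List.mem_singleton]
      constructor
      · rintro ⟨p, hp, rfl⟩
        rcases hp with hp | hp | hp
        · exact Or.inl ⟨p, Or.inl hp, rfl⟩
        · exact Or.inr (hvmem p hp)
        · exact Or.inl ⟨p, Or.inr hp, rfl⟩
      · rintro (⟨p, hp, rfl⟩ | rfl)
        · rcases hp with hp | hp
          · exact ⟨p, Or.inl hp, rfl⟩
          · exact ⟨p, Or.inr (Or.inr hp), rfl⟩
        · exact ⟨⟨n, o, s⟩, Or.inr (Or.inl (by rw [hv]; exact List.mem_cons_self)), rfl⟩)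
    (by
      intro n hn
      exact wt_sgn_eq_of_map hva hvb hn 0 (fun k hk _ => hmap k hk))
  rw [hsplit]
  simp [hnew.2]

end AffPInv
namespace AffPInv

/-- The pair of R2 segments forms a valid code. -/
lemma validK_r2pair (i j : ℕ) (o ord : Bool) (s : ℤ) (hs : s = 1 ∨ s = -1) (hij : i ≠ j) :
    ValidK (([⟨i, o, s⟩, ⟨j, o, -s⟩] : KCode) ++
      (if ord then ([⟨j, !o, -s⟩, ⟨i, !o, s⟩] : KCode) else [⟨i, !o, s⟩, ⟨j, !o, -s⟩])) := by
  have h1 : (i == j) = false := by simp [hij]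
  have h2 : (j == i) = false := by simp [Ne.symm hij]
  intro p hp
  have hmem : p = ⟨i, o, s⟩ ∨ p = ⟨j, o, -s⟩ ∨ p = ⟨i, !o, s⟩ ∨ p = ⟨j, !o, -s⟩ := by
    cases ord <;> simp at hp <;> tauto
  refine ⟨?_, ?_, ?_, ?_⟩
  · rcases hmem with rfl | rfl | rfl | rfl <;> rcases hs with rfl | rfl <;> norm_num
  · rcases hmem with rfl | rfl | rfl | rfl <;> cases o <;> cases ord <;>
      simp [List.filter, h1, h2]
  · rcases hmem with rfl | rfl | rfl | rfl <;> cases o <;> cases ord <;>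
      simp [List.filter, h1, h2]
  · intro q hq hqi
    have hqmem : q = ⟨i, o, s⟩ ∨ q = ⟨j, o, -s⟩ ∨ q = ⟨i, !o, s⟩ ∨ q = ⟨j, !o, -s⟩ := by
      cases ord <;> simp at hq <;> tauto
    rcases hmem with rfl | rfl | rfl | rfl <;> rcases hqmem with rfl | rfl | rfl | rfl <;>
      simp_all

open LaurentPolynomial in
/-- Invariance of the affine index polynomial under the second Reidemeister move. -/
lemma r2_aff {x y z : KCode} (i j : ℕ) (o ord : Bool) (s : ℤ) (hs : s = 1 ∨ s = -1)
    (hij : i ≠ j) (hi : i ∉ crossIds (x ++ (y ++ z))) (hj : j ∉ crossIds (x ++ (y ++ z)))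
    (hva : ValidK (x ++ (y ++ z)))
    (hvb : ValidK (x ++ (([⟨i, o, s⟩, ⟨j, o, -s⟩] : KCode) ++
      (y ++ ((if ord then ([⟨j, !o, -s⟩, ⟨i, !o, s⟩] : KCode) else [⟨i, !o, s⟩, ⟨j, !o, -s⟩]) ++ z))))) :
    affP (x ++ (([⟨i, o, s⟩, ⟨j, o, -s⟩] : KCode) ++
      (y ++ ((if ord then ([⟨j, !o, -s⟩, ⟨i, !o, s⟩] : KCode) else [⟨i, !o, s⟩, ⟨j, !o, -s⟩]) ++ z))))
      = affP (x ++ (y ++ z)) := by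
  set A : KCode := [⟨i, o, s⟩, ⟨j, o, -s⟩] with hA
  set B : KCode := (if ord then ([⟨j, !o, -s⟩, ⟨i, !o, s⟩] : KCode) else [⟨i, !o, s⟩, ⟨j, !o, -s⟩]) with hB
  set b : KCode := x ++ (A ++ (y ++ (B ++ z))) with hb
  set a : KCode := x ++ (y ++ z) with ha
  have hAlen : A.length = 2 := by rw [hA]; rfl
  have hBlen : B.length = 2 := by rw [hB]; cases ord <;> rfl
  have hSA : S A = 0 := by rw [hA]; cases o <;> simp [Passage.inc]
  have hSB : S B = 0 := by rw [hB]; cases o <;> cases ord <;> simp [Passage.inc]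
  have hblen : b.length = x.length + 2 + y.length + 2 + z.length := by
    simp only [hb, List.length_append, hAlen, hBlen]; omega
  have halen : a.length = x.length + y.length + z.length := by
    simp only [ha, List.length_append]; omega
  -- ids appearing in A and B
  have hABid : ∀ p : Passage, p ∈ A ∨ p ∈ B → p.id = i ∨ p.id = j := by
    intro p hp
    have : p = (⟨i, o, s⟩ : Passage) ∨ p = ⟨j, o, -s⟩ ∨ p = ⟨i, !o, s⟩ ∨ p = ⟨j, !o, -s⟩ := by
      rw [hA] at hp
      rw [hB] at hp
      cases ord <;> simp at hp <;> tauto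
    rcases this with rfl | rfl | rfl | rfl
    · exact Or.inl rfl
    · exact Or.inr rfl
    · exact Or.inl rfl
    · exact Or.inr rfl
  -- position correspondence for old crossings
  have hmap : ∀ k < a.length, ∃ k', k' < b.length ∧
      b.getD k' default = a.getD k default ∧
      labelAt b k' = labelAt a k + 0 := by
    intro k hk
    rw [halen] at hk
    rcases lt_or_ge k x.length with h | h
    · refine ⟨k, by omega, ?_, ?_⟩
      · rw [hb, ha, List.getD_append _ _ _ _ h, List.getD_append _ _ _ _ h]
      · rw [hb, ha, labelAt_append_le _ _ (le_of_lt h), labelAt_append_le _ _ (le_of_lt h)]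
        ring
    · obtain ⟨m, rfl⟩ : ∃ m, k = x.length + m := ⟨k - x.length, by omega⟩
      rcases lt_or_ge m y.length with h2 | h2
      · refine ⟨x.length + (A.length + m), by rw [hblen, hAlen]; omega, ?_, ?_⟩
        · have e1 : b.getD (x.length + (A.length + m)) default = y.getD m default := by
            rw [hb, getD_append_add, getD_append_add, List.getD_append _ _ _ _ h2]
          have e2 : a.getD (x.length + m) default = y.getD m default := by
            rw [ha, getD_append_add, List.getD_append _ _ _ _ h2]
          rw [e1, e2]
        · have e1 : labelAt b (x.length + (A.length + m)) = S x + labelAt y m := by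
            rw [hb, labelAt_append_add, labelAt_append_add, hSA,
              labelAt_append_le _ _ (le_of_lt h2)]
            ring
          have e2 : labelAt a (x.length + m) = S x + labelAt y m := by
            rw [ha, labelAt_append_add, labelAt_append_le _ _ (le_of_lt h2)]
          rw [e1, e2]
          ring
      · obtain ⟨m', rfl⟩ : ∃ m', m = y.length + m' := ⟨m - y.length, by omega⟩
        have hm' : m' < z.length := by omega
        refine ⟨x.length + (A.length + (y.length + (B.length + m'))),
          by rw [hblen, hAlen, hBlen]; omega, ?_, ?_⟩
        · have e1 : b.getD (x.length + (A.length + (y.length + (B.length + m')))) default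
              = z.getD m' default := by
            rw [hb, getD_append_add, getD_append_add, getD_append_add, getD_append_add]
          have e2 : a.getD (x.length + (y.length + m')) default = z.getD m' default := by
            rw [ha, getD_append_add, getD_append_add]
          rw [e1, e2]
        · have e1 : labelAt b (x.length + (A.length + (y.length + (B.length + m'))))
              = S x + S y + labelAt z m' := by
            rw [hb, labelAt_append_add, labelAt_append_add, labelAt_append_add,
              labelAt_append_add, hSA, hSB]
            ring
          have e2 : labelAt a (x.length + (y.length + m')) = S x + S y + labelAt z m' := by
            rw [ha, labelAt_append_add, labelAt_append_add]
            ring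
          rw [e1, e2]
          ring
  -- data of the two new crossings
  have hget0 : b.getD x.length default = A.getD 0 default := by
    have := getD_append_add x (A ++ (y ++ (B ++ z))) 0
    rw [Nat.add_zero] at this
    rw [hb, this, List.getD_append _ _ _ _ (by omega)]
  have hget1 : b.getD (x.length + 1) default = A.getD 1 default := by
    rw [hb, getD_append_add, List.getD_append _ _ _ _ (by omega)]
  have hgetB0 : b.getD (x.length + (A.length + y.length)) default = B.getD 0 default := by
    have h0 : (B ++ z).getD 0 default = B.getD 0 default :=
      List.getD_append _ _ _ _ (by omega)
    have := getD_append_add y (B ++ z) 0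
    rw [Nat.add_zero] at this
    rw [hb, getD_append_add, getD_append_add, this, h0]
  have hgetB1 : b.getD (x.length + (A.length + (y.length + 1))) default = B.getD 1 default := by
    rw [hb, getD_append_add, getD_append_add, getD_append_add,
      List.getD_append _ _ _ _ (by omega)]
  have hlab0 : labelAt b x.length = S x := by
    rw [hb, labelAt_append_le _ _ (le_refl _), labelAt_length]
  have hlab1 : labelAt b (x.length + 1) = S x + (A.getD 0 default).inc := by
    rw [hb, labelAt_append_add]
    congr 1
    rw [hA]
    exact labelAt_cons_one _ _
  have hlabB0 : labelAt b (x.length + (A.length + y.length)) = S x + S y := by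
    have h0 : labelAt (B ++ z) 0 = 0 := labelAt_zero _
    have h1 := labelAt_append_add y (B ++ z) 0
    rw [Nat.add_zero, h0, add_zero] at h1
    rw [hb, labelAt_append_add, labelAt_append_add, h1, hSA]
    ring
  have hlabB1 : labelAt b (x.length + (A.length + (y.length + 1)))
      = S x + S y + (B.getD 0 default).inc := by
    have h1 : labelAt (B ++ z) 1 = (B.getD 0 default).inc := by
      rw [hB]
      cases ord
      · rw [if_neg (by simp)]
        exact labelAt_cons_one _ _
      · rw [if_pos rfl]
        exact labelAt_cons_one _ _
    rw [hb, labelAt_append_add, labelAt_append_add, labelAt_append_add, h1, hSA]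
    ring
  have hIJ : sgn b i = s ∧ sgn b j = -s ∧ wt b i = wt b j := by
    have hlt0 : x.length < b.length := by omega
    have hlt1 : x.length + 1 < b.length := by omega
    have hltB0 : x.length + (A.length + y.length) < b.length := by rw [hAlen]; omega
    have hltB1 : x.length + (A.length + (y.length + 1)) < b.length := by rw [hAlen]; omega
    cases o <;> cases ord
    · -- o = false, ord = false : A=[iF,jF], B=[iT,jT]
      have cbi := corr hvb (i := i) (mo := x.length + (A.length + y.length)) (mu := x.length)
        (po := ⟨i, !false, s⟩) (pu := ⟨i, false, s⟩) hltB0 hlt0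
        (by rw [hgetB0, hB]; rfl) (by rw [hget0, hA]; rfl) rfl rfl rfl rfl
      have cbj := corr hvb (i := j) (mo := x.length + (A.length + (y.length + 1))) (mu := x.length + 1)
        (po := ⟨j, !false, -s⟩) (pu := ⟨j, false, -s⟩) hltB1 hlt1
        (by rw [hgetB1, hB]; rfl) (by rw [hget1, hA]; rfl) rfl rfl rfl rfl
      refine ⟨by rw [cbi.2.2], by rw [cbj.2.2], ?_⟩
      unfold wt
      rw [cbi.1, cbi.2.1, cbi.2.2, cbj.1, cbj.2.1, cbj.2.2,
        hlab0, hlab1, hlabB0, hlabB1, hA, hB]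
      simp [Passage.inc]
      try ring
    · -- o = false, ord = true : A=[iF,jF], B=[jT,iT]
      have cbi := corr hvb (i := i) (mo := x.length + (A.length + (y.length + 1))) (mu := x.length)
        (po := ⟨i, !false, s⟩) (pu := ⟨i, false, s⟩) hltB1 hlt0
        (by rw [hgetB1, hB]; rfl) (by rw [hget0, hA]; rfl) rfl rfl rfl rfl
      have cbj := corr hvb (i := j) (mo := x.length + (A.length + y.length)) (mu := x.length + 1)
        (po := ⟨j, !false, -s⟩) (pu := ⟨j, false, -s⟩) hltB0 hlt1
        (by rw [hgetB0, hB]; rfl) (by rw [hget1, hA]; rfl) rfl rfl rfl rfl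
      refine ⟨by rw [cbi.2.2], by rw [cbj.2.2], ?_⟩
      unfold wt
      rw [cbi.1, cbi.2.1, cbi.2.2, cbj.1, cbj.2.1, cbj.2.2,
        hlab0, hlab1, hlabB0, hlabB1, hA, hB]
      simp [Passage.inc]
      try ring
    · -- o = true, ord = false : A=[iT,jT], B=[iF,jF]
      have cbi := corr hvb (i := i) (mo := x.length) (mu := x.length + (A.length + y.length))
        (po := ⟨i, true, s⟩) (pu := ⟨i, !true, s⟩) hlt0 hltB0
        (by rw [hget0, hA]; rfl) (by rw [hgetB0, hB]; rfl) rfl rfl rfl rfl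
      have cbj := corr hvb (i := j) (mo := x.length + 1) (mu := x.length + (A.length + (y.length + 1)))
        (po := ⟨j, true, -s⟩) (pu := ⟨j, !true, -s⟩) hlt1 hltB1
        (by rw [hget1, hA]; rfl) (by rw [hgetB1, hB]; rfl) rfl rfl rfl rfl
      refine ⟨by rw [cbi.2.2], by rw [cbj.2.2], ?_⟩
      unfold wt
      rw [cbi.1, cbi.2.1, cbi.2.2, cbj.1, cbj.2.1, cbj.2.2,
        hlab0, hlab1, hlabB0, hlabB1, hA, hB]
      simp [Passage.inc]
      try ring
    · -- o = true, ord = true : A=[iT,jT], B=[jF,iF]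
      have cbi := corr hvb (i := i) (mo := x.length) (mu := x.length + (A.length + (y.length + 1)))
        (po := ⟨i, true, s⟩) (pu := ⟨i, !true, s⟩) hlt0 hltB1
        (by rw [hget0, hA]; rfl) (by rw [hgetB1, hB]; rfl) rfl rfl rfl rfl
      have cbj := corr hvb (i := j) (mo := x.length + 1) (mu := x.length + (A.length + y.length))
        (po := ⟨j, true, -s⟩) (pu := ⟨j, !true, -s⟩) hlt1 hltB0
        (by rw [hget1, hA]; rfl) (by rw [hgetB0, hB]; rfl) rfl rfl rfl rfl
      refine ⟨by rw [cbi.2.2], by rw [cbj.2.2], ?_⟩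
      unfold wt
      rw [cbi.1, cbi.2.1, cbi.2.2, cbj.1, cbj.2.1, cbj.2.2,
        hlab0, hlab1, hlabB0, hlabB1, hA, hB]
      simp [Passage.inc]
      try ring
  have hsplit := affP_split a b [i, j]
    (by
      rw [List.nodup_append]
      refine ⟨List.nodup_dedup _, by simp [hij], ?_⟩
      intro n hn m hn' hnm
      simp only [List.mem_cons, List.not_mem_nil, or_false] at hn'
      rcases hn' with rfl | rfl
      · rw [hnm] at hn; exact hi hn
      · rw [hnm] at hn; exact hj hn)
    (by
      intro n
      simp only [mem_crossIds, List.mem_cons, List.not_mem_nil, or_false]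
      constructor
      · rintro ⟨p, hp, rfl⟩
        rw [hb] at hp
        simp only [List.mem_append] at hp
        rcases hp with hp | hp | hp | hp | hp
        · exact Or.inl ⟨p, by rw [ha]; simp [hp], rfl⟩
        · exact Or.inr (hABid p (Or.inl hp))
        · exact Or.inl ⟨p, by rw [ha]; simp [hp], rfl⟩
        · exact Or.inr (hABid p (Or.inr hp))
        · exact Or.inl ⟨p, by rw [ha]; simp [hp], rfl⟩
      · rintro (⟨p, hp, rfl⟩ | rfl | rfl)
        · rw [ha] at hp
          simp only [List.mem_append] at hp
          refine ⟨p, by rw [hb]; simp only [List.mem_append]; tauto, rfl⟩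
        · refine ⟨⟨n, o, s⟩, ?_, rfl⟩
          rw [hb]
          simp only [List.mem_append]
          right; left
          rw [hA]
          exact List.mem_cons_self
        · refine ⟨⟨n, o, -s⟩, ?_, rfl⟩
          rw [hb]
          simp only [List.mem_append]
          right; left
          rw [hA]
          simp
    )
    (by
      intro n hn
      exact wt_sgn_eq_of_map hva hvb hn 0 (fun k hk _ => hmap k hk))
  rw [hsplit]
  simp only [List.map_cons, List.map_nil, List.sum_cons, List.sum_nil, add_zero]
  rw [hIJ.1, hIJ.2.1, hIJ.2.2, map_neg]
  ring

end AffPInv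
namespace AffPInv

@[simp] lemma pairOf_length (c : Bool) (p q : Passage) : (pairOf c p q).length = 2 := by
  cases c <;> rfl

@[simp] lemma S_pairOf (c : Bool) (p q : Passage) : S (pairOf c p q) = p.inc + q.inc := by
  cases c <;> simp [pairOf] <;> ring

lemma mem_pairOf {c : Bool} {p q r : Passage} (h : r ∈ pairOf c p q) : r = p ∨ r = q := by
  cases c <;> simp [pairOf] at h <;> tauto

lemma pairOf_perm (c : Bool) (p q : Passage) : (pairOf (!c) p q).Perm (pairOf c p q) := by
  cases c <;> simp [pairOf] <;> exact List.Perm.swap _ _ _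

/-- Facts about a transposed two-passage slot. -/
lemma pfact {a b W W' Z Z' : KCode} {p q : Passage}
    (ha : a = W ++ (([p, q] : KCode) ++ Z)) (hb : b = W' ++ (([q, p] : KCode) ++ Z'))
    (hw : W'.length = W.length) (hS : S W' = S W) :
    a.getD W.length default = p ∧ a.getD (W.length + 1) default = q ∧
    b.getD W.length default = q ∧ b.getD (W.length + 1) default = p ∧
    labelAt a W.length = S W ∧ labelAt a (W.length + 1) = S W + p.inc ∧
    labelAt b W.length = S W ∧ labelAt b (W.length + 1) = S W + q.inc ∧
    W.length + 1 < a.length ∧ W.length + 1 < b.length := by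
  have e0 : ∀ (u : KCode) (r : Passage) (l : KCode), (u ++ (r :: l)).getD u.length default = r := by
    intro u r l
    have := getD_append_add u (r :: l) 0
    rw [Nat.add_zero] at this
    rw [this]; rfl
  have e1 : ∀ (u : KCode) (r r' : Passage) (l : KCode),
      (u ++ (r :: r' :: l)).getD (u.length + 1) default = r' := by
    intro u r r' l
    rw [getD_append_add]; rfl
  have l0 : ∀ (u : KCode) (l : KCode), labelAt (u ++ l) u.length = S u := by
    intro u l
    rw [labelAt_append_le _ _ (le_refl _), labelAt_length]
  have l1 : ∀ (u : KCode) (r : Passage) (l : KCode),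
      labelAt (u ++ (r :: l)) (u.length + 1) = S u + r.inc := by
    intro u r l
    rw [labelAt_append_add, labelAt_cons_one]
  refine ⟨?_, ?_, ?_, ?_, ?_, ?_, ?_, ?_, ?_, ?_⟩
  · rw [ha]; exact e0 W p ([q] ++ Z)
  · rw [ha]; exact e1 W p q Z
  · rw [hb, ← hw]; exact e0 W' q ([p] ++ Z')
  · rw [hb, ← hw]; exact e1 W' q p Z'
  · rw [ha]; exact l0 W _
  · rw [ha]; exact l1 W p _
  · rw [hb, ← hw]
    have h := l0 W' ([q, p] ++ Z')
    rw [hS] at h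
    exact h
  · rw [hb, ← hw]
    have h := l1 W' q ([p] ++ Z')
    rw [hS] at h
    exact h
  · rw [ha]; simp only [List.length_append, List.length_cons]; omega
  · rw [hb, ← hw]; simp only [List.length_append, List.length_cons]; omega

/-- Positions and labels of the two passages of a transposed `pairOf` slot. -/
lemma pfact_pairOf {a b W W' Z Z' : KCode} {t : Bool} {p q : Passage}
    (ha : a = W ++ (pairOf t p q ++ Z)) (hb : b = W' ++ (pairOf (!t) p q ++ Z'))
    (hw : W'.length = W.length) (hS : S W' = S W) :
    ∃ kp kq kp' kq' : ℕ, ∃ ℓ : ℤ,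
      kp < a.length ∧ kq < a.length ∧ kp' < b.length ∧ kq' < b.length ∧
      a.getD kp default = p ∧ a.getD kq default = q ∧
      b.getD kp' default = p ∧ b.getD kq' default = q ∧
      labelAt a kp = ℓ + (if t then 0 else q.inc) ∧
      labelAt b kp' = ℓ + (if t then q.inc else 0) ∧
      labelAt a kq = ℓ + (if t then p.inc else 0) ∧
      labelAt b kq' = ℓ + (if t then 0 else p.inc) := by
  cases t
  · -- pairOf false p q = [q, p], pairOf (!false) = [p, q]
    have ha' : a = W ++ (([q, p] : KCode) ++ Z) := ha
    have hb' : b = W' ++ (([p, q] : KCode) ++ Z') := hb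
    obtain ⟨g1, g2, g3, g4, g5, g6, g7, g8, g9, g10⟩ := pfact hb' ha' hw.symm hS.symm
    exact ⟨W'.length + 1, W'.length, W'.length, W'.length + 1, S W',
      g10, lt_of_le_of_lt (Nat.le_succ _) g10, lt_of_le_of_lt (Nat.le_succ _) g9, g9,
      g4, g3, g1, g2, by simpa using g8, by simpa using g5, by simpa using g7,
      by simpa using g6⟩
  · -- pairOf true p q = [p, q], pairOf (!true) = [q, p]
    have ha' : a = W ++ (([p, q] : KCode) ++ Z) := ha
    have hb' : b = W' ++ (([q, p] : KCode) ++ Z') := hb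
    obtain ⟨g1, g2, g3, g4, g5, g6, g7, g8, g9, g10⟩ := pfact ha' hb' hw hS
    exact ⟨W.length, W.length + 1, W.length + 1, W.length, S W,
      lt_of_le_of_lt (Nat.le_succ _) g9, g9, g10, lt_of_le_of_lt (Nat.le_succ _) g10,
      g1, g2, g4, g3, by simpa using g5, by simpa using g8, by simpa using g6,
      by simpa using g7⟩

/-- Slot decomposition for the three R3 segments. -/
lemma deco3 {c c' X1 X2 X3 X4 : KCode} {s1 s2 s3 : KCode × KCode}
    (hc : c = X1 ++ s1.1 ++ (X2 ++ s2.1 ++ (X3 ++ s3.1 ++ X4)))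
    (hc' : c' = X1 ++ s1.2 ++ (X2 ++ s2.2 ++ (X3 ++ s3.2 ++ X4)))
    (hlen : ∀ r ∈ [s1, s2, s3], r.1.length = r.2.length ∧ S r.1 = S r.2)
    {u v : KCode} (hm : (u, v) ∈ [s1, s2, s3]) :
    ∃ W W' Z Z', c = W ++ (u ++ Z) ∧ c' = W' ++ (v ++ Z') ∧ W'.length = W.length ∧
      S W' = S W := by
  simp only [List.mem_cons, List.not_mem_nil, or_false] at hm
  have h1 := hlen s1 (by simp)
  have h2 := hlen s2 (by simp)
  rcases hm with h | h | h
  · refine ⟨X1, X1, X2 ++ s2.1 ++ (X3 ++ s3.1 ++ X4), X2 ++ s2.2 ++ (X3 ++ s3.2 ++ X4),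
      ?_, ?_, rfl, rfl⟩
    · rw [hc, show s1.1 = u from by rw [← h]]
      simp [List.append_assoc]
    · rw [hc', show s1.2 = v from by rw [← h]]
      simp [List.append_assoc]
  · refine ⟨X1 ++ s1.1 ++ X2, X1 ++ s1.2 ++ X2, X3 ++ s3.1 ++ X4, X3 ++ s3.2 ++ X4,
      ?_, ?_, ?_, ?_⟩
    · rw [hc, show s2.1 = u from by rw [← h]]
      simp [List.append_assoc]
    · rw [hc', show s2.2 = v from by rw [← h]]
      simp [List.append_assoc]
    · simp only [List.length_append, h1.1]
    · simp only [S_append, h1.2]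
  · refine ⟨X1 ++ s1.1 ++ (X2 ++ s2.1 ++ X3), X1 ++ s1.2 ++ (X2 ++ s2.2 ++ X3),
      X4, X4, ?_, ?_, ?_, ?_⟩
    · rw [hc, show s3.1 = u from by rw [← h]]
      simp [List.append_assoc]
    · rw [hc', show s3.2 = v from by rw [← h]]
      simp [List.append_assoc]
    · simp only [List.length_append, h1.1, h2.1]
    · simp only [S_append, h1.2, h2.2]

end AffPInv
namespace AffPInv

/-- Positions outside the three slots keep their passage and label. -/
lemma old3 {c c' X1 X2 X3 X4 u1 v1 u2 v2 u3 v3 : KCode}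
    (hc : c = X1 ++ (u1 ++ (X2 ++ (u2 ++ (X3 ++ (u3 ++ X4))))))
    (hc' : c' = X1 ++ (v1 ++ (X2 ++ (v2 ++ (X3 ++ (v3 ++ X4))))))
    (hl1 : u1.length = v1.length) (hl2 : u2.length = v2.length)
    (hl3 : u3.length = v3.length)
    (hS1 : S u1 = S v1) (hS2 : S u2 = S v2) (hS3 : S u3 = S v3)
    {m : ℕ} (hm : m < c.length)
    (hnot : c.getD m default ∉ u1 ∧ c.getD m default ∉ u2 ∧ c.getD m default ∉ u3) :
    m < c'.length ∧ c'.getD m default = c.getD m default ∧ labelAt c' m = labelAt c m := by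
  have hclen : c.length = X1.length + (u1.length + (X2.length + (u2.length +
      (X3.length + (u3.length + X4.length))))) := by
    rw [hc]; simp [List.length_append]
  have hc'len : c'.length = X1.length + (v1.length + (X2.length + (v2.length +
      (X3.length + (v3.length + X4.length))))) := by
    rw [hc']; simp [List.length_append]
  have hlt : m < c'.length := by omega
  refine ⟨hlt, ?_⟩
  rw [hclen] at hm
  by_cases h1 : m < X1.length
  · constructor
    · rw [hc, hc', List.getD_append _ _ _ _ h1, List.getD_append _ _ _ _ h1]
    · rw [hc, hc', labelAt_append_le _ _ (le_of_lt h1), labelAt_append_le _ _ (le_of_lt h1)]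
  by_cases h2 : m < X1.length + u1.length
  · exfalso
    obtain ⟨r, rfl⟩ : ∃ r, m = X1.length + r := ⟨m - X1.length, by omega⟩
    have hr : r < u1.length := by omega
    apply hnot.1
    rw [hc, getD_append_add, List.getD_append _ _ _ _ hr]
    exact getD_lt_mem hr
  by_cases h3 : m < X1.length + u1.length + X2.length
  · obtain ⟨r, rfl⟩ : ∃ r, m = X1.length + (u1.length + r) := ⟨m - X1.length - u1.length, by omega⟩
    have hr : r < X2.length := by omega
    have hm' : X1.length + (u1.length + r) = X1.length + (v1.length + r) := by omega
    constructor
    · rw [hc, getD_append_add, getD_append_add, List.getD_append _ _ _ _ hr,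
        hm', hc', getD_append_add, getD_append_add, List.getD_append _ _ _ _ hr]
    · rw [hc, labelAt_append_add, labelAt_append_add, labelAt_append_le _ _ (le_of_lt hr),
        hm', hc', labelAt_append_add, labelAt_append_add, labelAt_append_le _ _ (le_of_lt hr),
        hS1]
  by_cases h4 : m < X1.length + u1.length + X2.length + u2.length
  · exfalso
    obtain ⟨r, rfl⟩ : ∃ r, m = X1.length + (u1.length + (X2.length + r)) :=
      ⟨m - X1.length - u1.length - X2.length, by omega⟩
    have hr : r < u2.length := by omega
    apply hnot.2.1
    rw [hc, getD_append_add, getD_append_add, getD_append_add, List.getD_append _ _ _ _ hr]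
    exact getD_lt_mem hr
  by_cases h5 : m < X1.length + u1.length + X2.length + u2.length + X3.length
  · obtain ⟨r, rfl⟩ : ∃ r, m = X1.length + (u1.length + (X2.length + (u2.length + r))) :=
      ⟨m - X1.length - u1.length - X2.length - u2.length, by omega⟩
    have hr : r < X3.length := by omega
    have hm' : X1.length + (u1.length + (X2.length + (u2.length + r)))
        = X1.length + (v1.length + (X2.length + (v2.length + r))) := by omega
    constructor
    · rw [hc, getD_append_add, getD_append_add, getD_append_add, getD_append_add,
        List.getD_append _ _ _ _ hr,
        hm', hc', getD_append_add, getD_append_add, getD_append_add, getD_append_add,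
        List.getD_append _ _ _ _ hr]
    · rw [hc, labelAt_append_add, labelAt_append_add, labelAt_append_add, labelAt_append_add,
        labelAt_append_le _ _ (le_of_lt hr),
        hm', hc', labelAt_append_add, labelAt_append_add, labelAt_append_add,
        labelAt_append_add, labelAt_append_le _ _ (le_of_lt hr), hS1, hS2]
  by_cases h6 : m < X1.length + u1.length + X2.length + u2.length + X3.length + u3.length
  · exfalso
    obtain ⟨r, rfl⟩ : ∃ r, m = X1.length + (u1.length + (X2.length + (u2.length +
        (X3.length + r)))) :=
      ⟨m - X1.length - u1.length - X2.length - u2.length - X3.length, by omega⟩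
    have hr : r < u3.length := by omega
    apply hnot.2.2
    rw [hc, getD_append_add, getD_append_add, getD_append_add, getD_append_add,
      getD_append_add, List.getD_append _ _ _ _ hr]
    exact getD_lt_mem hr
  · obtain ⟨r, rfl⟩ : ∃ r, m = X1.length + (u1.length + (X2.length + (u2.length +
        (X3.length + (u3.length + r))))) :=
      ⟨m - X1.length - u1.length - X2.length - u2.length - X3.length - u3.length, by omega⟩
    have hr : r < X4.length := by omega
    have hm' : X1.length + (u1.length + (X2.length + (u2.length + (X3.length + (u3.length + r)))))
        = X1.length + (v1.length + (X2.length + (v2.length + (X3.length + (v3.length + r))))) := by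
      omega
    constructor
    · rw [hc, getD_append_add, getD_append_add, getD_append_add, getD_append_add,
        getD_append_add, getD_append_add,
        hm', hc', getD_append_add, getD_append_add, getD_append_add, getD_append_add,
        getD_append_add, getD_append_add]
    · rw [hc, labelAt_append_add, labelAt_append_add, labelAt_append_add, labelAt_append_add,
        labelAt_append_add, labelAt_append_add,
        hm', hc', labelAt_append_add, labelAt_append_add, labelAt_append_add,
        labelAt_append_add, labelAt_append_add, labelAt_append_add, hS1, hS2, hS3]

end AffPInv
namespace AffPInv

open LaurentPolynomial in
/-- Invariance of the affine index polynomial under the third Reidemeister move. -/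
lemma r3_aff {a b : KCode} (hva : ValidK a) (hvb : ValidK b)
    (i j k : ℕ) (si sj sk : ℤ)
    (hsi : si = 1 ∨ si = -1) (hsj : sj = 1 ∨ sj = -1) (hsk : sk = 1 ∨ sk = -1)
    (hij : i ≠ j) (hik : i ≠ k) (hjk : j ≠ k)
    (t : Bool) {segs : List (KCode × KCode)}
    (hsegs : segs.Perm
      [(pairOf t ⟨i, true, si⟩ ⟨j, true, sj⟩,
        pairOf (!t) ⟨i, true, si⟩ ⟨j, true, sj⟩),
       (pairOf (t == (sj * sk == 1)) ⟨i, false, si⟩ ⟨k, true, sk⟩,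
        pairOf (!(t == (sj * sk == 1))) ⟨i, false, si⟩ ⟨k, true, sk⟩),
       (pairOf (t == (si * sk == 1)) ⟨j, false, sj⟩ ⟨k, false, sk⟩,
        pairOf (!(t == (si * sk == 1))) ⟨j, false, sj⟩ ⟨k, false, sk⟩)])
    (hrep : ReplC a b segs []) : affP b = affP a := by
  set A : Passage := ⟨i, true, si⟩ with hA
  set B : Passage := ⟨j, true, sj⟩ with hB
  set C : Passage := ⟨i, false, si⟩ with hC
  set D : Passage := ⟨k, true, sk⟩ with hD
  set E : Passage := ⟨j, false, sj⟩ with hE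
  set F : Passage := ⟨k, false, sk⟩ with hF
  set t2 : Bool := (t == (sj * sk == 1)) with ht2
  set t3 : Bool := (t == (si * sk == 1)) with ht3
  -- the three segments
  obtain ⟨s1, s2, s3, rfl⟩ : ∃ s1 s2 s3, segs = [s1, s2, s3] := by
    have := hsegs.length_eq
    simp only [List.length_cons, List.length_nil] at this
    obtain ⟨s1, s2, s3, h⟩ := List.length_eq_three.mp this
    exact ⟨s1, s2, s3, h⟩
  obtain ⟨X1, X2, X3, X4, hc, hc'⟩ := replC_three (u1 := s1.1) (v1 := s1.2)
    (u2 := s2.1) (v2 := s2.2) (u3 := s3.1) (v3 := s3.2) (by simpa using hrep)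
  -- each segment is one of the three transposition pairs
  have hmemP : ∀ r ∈ [s1, s2, s3],
      r = (pairOf t A B, pairOf (!t) A B) ∨
      r = (pairOf t2 C D, pairOf (!t2) C D) ∨
      r = (pairOf t3 E F, pairOf (!t3) E F) := by
    intro r hr
    have := hsegs.subset hr
    simpa using this
  have hlen' : ∀ r ∈ [s1, s2, s3], r.1.length = r.2.length ∧ S r.1 = S r.2 := by
    intro r hr
    rcases hmemP r hr with rfl | rfl | rfl <;> simp
  -- b is a permutation of a
  have hperm : b.Perm a := by
    have p1 : s1.2.Perm s1.1 := by
      rcases hmemP s1 (by simp) with h | h | h <;> rw [h] <;> exact pairOf_perm _ _ _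
    have p2 : s2.2.Perm s2.1 := by
      rcases hmemP s2 (by simp) with h | h | h <;> rw [h] <;> exact pairOf_perm _ _ _
    have p3 : s3.2.Perm s3.1 := by
      rcases hmemP s3 (by simp) with h | h | h <;> rw [h] <;> exact pairOf_perm _ _ _
    rw [hc, hc']
    exact ((List.Perm.refl X1).append p1).append
      (((List.Perm.refl X2).append p2).append
        (((List.Perm.refl X3).append p3).append (List.Perm.refl X4)))
  -- facts for the three pairs
  have hP1 : (pairOf t A B, pairOf (!t) A B) ∈ [s1, s2, s3] :=
    hsegs.symm.subset (by simp)
  have hP2 : (pairOf t2 C D, pairOf (!t2) C D) ∈ [s1, s2, s3] :=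
    hsegs.symm.subset (by simp)
  have hP3 : (pairOf t3 E F, pairOf (!t3) E F) ∈ [s1, s2, s3] :=
    hsegs.symm.subset (by simp)
  obtain ⟨W1, W1', Z1, Z1', hd1, hd1', hw1, hS1⟩ := deco3 hc hc' hlen' hP1
  obtain ⟨W2, W2', Z2, Z2', hd2, hd2', hw2, hS2⟩ := deco3 hc hc' hlen' hP2
  obtain ⟨W3, W3', Z3, Z3', hd3, hd3', hw3, hS3⟩ := deco3 hc hc' hlen' hP3
  obtain ⟨kA, kB, kA', kB', l1, bA, bB, bA', bB', gA, gB, gA', gB', lA, lA', lB, lB'⟩ :=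
    pfact_pairOf hd1 hd1' hw1 hS1
  obtain ⟨kC, kD, kC', kD', l2, bC, bD, bC', bD', gC, gD, gC', gD', lC, lC', lD, lD'⟩ :=
    pfact_pairOf hd2 hd2' hw2 hS2
  obtain ⟨kE, kF, kE', kF', l3, bE, bF, bE', bF', gE, gF, gE', gF', lE, lE', lF, lF'⟩ :=
    pfact_pairOf hd3 hd3' hw3 hS3
  -- ids occurring in the slots
  have hids : ∀ r ∈ [s1, s2, s3], ∀ p ∈ r.1, p.id = i ∨ p.id = j ∨ p.id = k := by
    intro r hr p hp
    rcases hmemP r hr with h | h | h <;> rw [h] at hp <;>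
      rcases mem_pairOf hp with rfl | rfl <;> simp [hA, hB, hC, hD, hE, hF]
  -- right-associated decompositions for old3
  have hcr : a = X1 ++ (s1.1 ++ (X2 ++ (s2.1 ++ (X3 ++ (s3.1 ++ X4))))) := by
    rw [hc]; simp [List.append_assoc]
  have hcr' : b = X1 ++ (s1.2 ++ (X2 ++ (s2.2 ++ (X3 ++ (s3.2 ++ X4))))) := by
    rw [hc']; simp [List.append_assoc]
  have hterm : ∀ n ∈ crossIds a, sgn b n = sgn a n ∧ wt b n = wt a n := by
    intro n hn
    by_cases hni : n = i
    · subst hni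
      have ca := corr hva bA bC gA gC rfl rfl rfl rfl
      have cb := corr hvb bA' bC' gA' gC' rfl rfl rfl rfl
      refine ⟨by rw [cb.2.2, ca.2.2], ?_⟩
      unfold wt
      rw [ca.1, ca.2.1, ca.2.2, cb.1, cb.2.1, cb.2.2, lA, lA', lC, lC']
      rw [hB, hD, ht2]
      rcases hsj with rfl | rfl <;> rcases hsk with rfl | rfl <;> cases t <;>
        simp [Passage.inc] <;> ring
    by_cases hnj : n = j
    · subst hnj
      have ca := corr hva bB bE gB gE rfl rfl rfl rfl
      have cb := corr hvb bB' bE' gB' gE' rfl rfl rfl rfl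
      refine ⟨by rw [cb.2.2, ca.2.2], ?_⟩
      unfold wt
      rw [ca.1, ca.2.1, ca.2.2, cb.1, cb.2.1, cb.2.2, lB, lB', lE, lE']
      rw [hA, hF, ht3]
      rcases hsi with rfl | rfl <;> rcases hsk with rfl | rfl <;> cases t <;>
        simp [Passage.inc] <;> ring
    by_cases hnk : n = k
    · subst hnk
      have ca := corr hva bD bF gD gF rfl rfl rfl rfl
      have cb := corr hvb bD' bF' gD' gF' rfl rfl rfl rfl
      refine ⟨by rw [cb.2.2, ca.2.2], ?_⟩
      unfold wt
      rw [ca.1, ca.2.1, ca.2.2, cb.1, cb.2.1, cb.2.2, lD, lD', lF, lF']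
      rw [hC, hE, ht2, ht3]
      rcases hsi with rfl | rfl <;> rcases hsj with rfl | rfl <;>
        rcases hsk with rfl | rfl <;> cases t <;> simp [Passage.inc] <;> ring
    · -- old crossings
      apply wt_sgn_eq_of_map hva hvb hn 0
      intro m hm hid
      have h1 := hlen' s1 (by simp)
      have h2 := hlen' s2 (by simp)
      have h3 := hlen' s3 (by simp)
      have hnot : a.getD m default ∉ s1.1 ∧ a.getD m default ∉ s2.1 ∧
          a.getD m default ∉ s3.1 := by
        refine ⟨?_, ?_, ?_⟩ <;> intro hcon
        · rcases hids s1 (by simp) _ hcon with h | h | h <;> rw [hid] at h <;> tauto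
        · rcases hids s2 (by simp) _ hcon with h | h | h <;> rw [hid] at h <;> tauto
        · rcases hids s3 (by simp) _ hcon with h | h | h <;> rw [hid] at h <;> tauto
      obtain ⟨hlt, hg, hl⟩ := old3 hcr hcr' h1.1 h2.1 h3.1 h1.2 h2.2 h3.2 hm hnot
      exact ⟨m, hlt, hg, by rw [hl]; ring⟩
  -- conclude
  have hsplit := affP_split a b []
    (by rw [List.append_nil]; exact List.nodup_dedup _)
    (by intro n; simpa using crossIds_perm hperm n)
    hterm
  simpa using hsplit

end AffPInv
namespace AffPInv

/-- Validity transfer for the second Reidemeister move. -/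
lemma validK_r2 {x y z : KCode} (i j : ℕ) (o ord : Bool) (s : ℤ)
    (hs : s = 1 ∨ s = -1) (hij : i ≠ j)
    (hi : i ∉ crossIds (x ++ (y ++ z))) (hj : j ∉ crossIds (x ++ (y ++ z))) :
    ValidK (x ++ (([⟨i, o, s⟩, ⟨j, o, -s⟩] : KCode) ++
      (y ++ ((if ord then ([⟨j, !o, -s⟩, ⟨i, !o, s⟩] : KCode) else [⟨i, !o, s⟩, ⟨j, !o, -s⟩]) ++ z))))
      ↔ ValidK (x ++ (y ++ z)) := by
  set A : KCode := [⟨i, o, s⟩, ⟨j, o, -s⟩] with hA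
  set B : KCode := (if ord then ([⟨j, !o, -s⟩, ⟨i, !o, s⟩] : KCode) else [⟨i, !o, s⟩, ⟨j, !o, -s⟩]) with hB
  have hperm : (x ++ (A ++ (y ++ (B ++ z)))).Perm ((x ++ (y ++ z)) ++ (A ++ B)) := by
    rw [← Multiset.coe_eq_coe]
    simp only [← Multiset.coe_add]
    abel
  have hdisj : ∀ p ∈ x ++ (y ++ z), ∀ q ∈ A ++ B, p.id ≠ q.id := by
    intro p hp q hq
    have hqid : q.id = i ∨ q.id = j := by
      rw [hA, hB] at hq
      have : q = (⟨i, o, s⟩ : Passage) ∨ q = ⟨j, o, -s⟩ ∨ q = ⟨i, !o, s⟩ ∨ q = ⟨j, !o, -s⟩ := by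
        cases ord <;> simp at hq <;> tauto
      rcases this with rfl | rfl | rfl | rfl
      · exact Or.inl rfl
      · exact Or.inr rfl
      · exact Or.inl rfl
      · exact Or.inr rfl
    rcases hqid with hq' | hq' <;> rw [hq'] <;> intro hcon
    · exact hi (mem_crossIds.mpr ⟨p, hp, hcon⟩)
    · exact hj (mem_crossIds.mpr ⟨p, hp, hcon⟩)
  constructor
  · intro h
    exact ((validK_append_disjoint hdisj).mp (validK_perm hperm h)).1
  · intro h
    apply validK_perm hperm.symm
    exact (validK_append_disjoint hdisj).mpr ⟨h, by
      have := validK_r2pair i j o ord s hs hij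
      rw [hA, hB]
      exact this⟩

lemma replC_perm {c c' : KCode} {segs segs' : List (KCode × KCode)}
    (h : ReplC c c' segs segs') (hp : ∀ r ∈ segs, r.2.Perm r.1) : c'.Perm c := by
  induction h with
  | nil => exact List.Perm.refl _
  | cons x u v h ih =>
    have hv : v.Perm u := hp (u, v) (by simp)
    have hy := ih (fun r hr => hp r (by simp [hr]))
    exact ((List.Perm.refl x).append hv).append hy

/-- A labeled link which is a single valid circle. -/
def Inv (L : LLC) : Prop := ∃ kk c, L = [(kk, c)] ∧ ValidK c

/-- The code of the first component. -/
def code1 (L : LLC) : KCode := (L.headD (0, [])).2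

lemma inv_cons {p : ℕ × KCode} {M : LLC} (h : Inv (p :: M)) : M = [] ∧ ValidK p.2 := by
  obtain ⟨kk, c, heq, hv⟩ := h
  injection heq with h1 h2
  exact ⟨h2, by rw [h1]; exact hv⟩

lemma inv_mk {kk : ℕ} {c : KCode} (h : ValidK c) : Inv [(kk, c)] := ⟨kk, c, rfl, h⟩

open LaurentPolynomial in
/-- Single-step invariance. -/
lemma key {L L' : LLC} (h : MoveStep L L') :
    (Inv L ↔ Inv L') ∧ (Inv L → Inv L' → affP (code1 L) = affP (code1 L')) := by
  cases h with
  | perm hp =>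
    have hsingle : ∀ {P Q : LLC}, P.Perm Q → Inv P → Q = P := by
      rintro P Q hpq ⟨kk, c, rfl, _⟩
      exact List.perm_singleton.mp hpq.symm
    constructor
    · constructor
      · intro hI; rw [hsingle hp hI]; exact hI
      · intro hI; rw [hsingle hp.symm hI]; exact hI
    · intro hI _; rw [hsingle hp hI]
  | rotate kk x y M =>
    constructor
    · constructor
      · intro hI
        obtain ⟨hM, hv⟩ := inv_cons hI
        subst hM
        exact inv_mk (validK_perm List.perm_append_comm hv)
      · intro hI
        obtain ⟨hM, hv⟩ := inv_cons hI
        subst hM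
        exact inv_mk (validK_perm List.perm_append_comm hv)
    · intro h1 h2
      obtain ⟨_, hv⟩ := inv_cons h1
      obtain ⟨_, hv'⟩ := inv_cons h2
      exact (rotate_aff hv hv').symm
  | rename f hf =>
    constructor
    · constructor
      · rintro ⟨kk, c, rfl, hv⟩
        exact inv_mk ((validK_relabel hf c).mpr hv)
      · intro hI
        obtain ⟨kk, c', heq, hv⟩ := hI
        match L, heq with
        | [(kk0, c0)], heq =>
          injection heq with h1 h2
          injection h1 with h1a h1b
          refine ⟨kk0, c0, rfl, ?_⟩
          rw [← h1b] at hv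
          exact (validK_relabel hf c0).mp hv
    · rintro ⟨kk, c, rfl, hv⟩ _
      exact (relabel_aff hf c hv).symm
  | r1 i o s hs hi hrep =>
    have main : ∀ kk c, L = [(kk, c)] → ValidK c →
        ∃ c', L' = [(kk, c')] ∧ (ValidK c ↔ ValidK c') ∧
          (ValidK c' → affP c = affP c') := by
      intro kk c hL hv
      subst hL
      obtain ⟨c', hL', hC⟩ := replL_singleton hrep
      obtain ⟨x, y, hcx, hcy⟩ := replC_one hC
      have hcx' : c = x ++ y := by simpa using hcx
      have hcy' : c' = x ++ (([⟨i, o, s⟩, ⟨i, !o, s⟩] : KCode) ++ y) := by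
        rw [hcy, List.append_assoc]
      have hi' : i ∉ crossIds (x ++ y) := by
        rw [← hcx']
        intro hmem
        exact hi ((idsOf_singleton kk c i).mpr hmem)
      refine ⟨c', hL', ?_, ?_⟩
      · rw [hcx', hcy']
        exact (validK_r1 i o s hs hi').symm
      · intro hv'
        rw [hcx', hcy']
        rw [hcy'] at hv'
        rw [hcx'] at hv
        exact (r1_aff i o s hs hi' hv hv').symm
    constructor
    · constructor
      · rintro ⟨kk, c, hL, hv⟩
        obtain ⟨c', hL', hiff, _⟩ := main kk c hL hv
        exact ⟨kk, c', hL', hiff.mp hv⟩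
      · rintro ⟨kk, c', hL', hv'⟩
        obtain ⟨c, hL, hC⟩ := replL_singleton' (hL' ▸ hrep)
        obtain ⟨x, y, hcx, hcy⟩ := replC_one hC
        have hcx' : c = x ++ y := by simpa using hcx
        have hcy' : c' = x ++ (([⟨i, o, s⟩, ⟨i, !o, s⟩] : KCode) ++ y) := by
          rw [hcy, List.append_assoc]
        have hi' : i ∉ crossIds (x ++ y) := by
          rw [← hcx']
          intro hmem
          rw [hL] at hi
          exact hi ((idsOf_singleton kk c i).mpr hmem)
        refine ⟨kk, c, hL, ?_⟩
        rw [hcx']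
        rw [hcy'] at hv'
        exact (validK_r1 i o s hs hi').mp hv'
    · rintro ⟨kk, c, hL, hv⟩ h2
      obtain ⟨c', hL', _, haff⟩ := main kk c hL hv
      rw [hL, hL']
      apply haff
      rw [hL'] at h2
      exact (inv_cons h2).2
  | r2 i j o ord s hs hij hi hj hrep =>
    have main : ∀ kk c, L = [(kk, c)] → ∃ c' x y z, L' = [(kk, c')] ∧
        c = x ++ (y ++ z) ∧
        c' = x ++ (([⟨i, o, s⟩, ⟨j, o, -s⟩] : KCode) ++
          (y ++ ((if ord then ([⟨j, !o, -s⟩, ⟨i, !o, s⟩] : KCode)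
            else [⟨i, !o, s⟩, ⟨j, !o, -s⟩]) ++ z))) ∧
        i ∉ crossIds c ∧ j ∉ crossIds c := by
      intro kk c hL
      subst hL
      obtain ⟨c', hL', hC⟩ := replL_singleton hrep
      obtain ⟨x, y, z, hcx, hcy⟩ := replC_two hC
      refine ⟨c', x, y, z, hL', by simpa using hcx, ?_, ?_, ?_⟩
      · rw [hcy]
        simp [List.append_assoc]
      · intro hmem
        exact hi ((idsOf_singleton kk c i).mpr hmem)
      · intro hmem
        exact hj ((idsOf_singleton kk c j).mpr hmem)
    constructor
    · constructor
      · rintro ⟨kk, c, hL, hv⟩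
        obtain ⟨c', x, y, z, hL', hcx, hcy, hi', hj'⟩ := main kk c hL
        rw [hcx] at hi' hj' hv
        refine ⟨kk, c', hL', ?_⟩
        rw [hcy]
        exact (validK_r2 i j o ord s hs hij hi' hj').mpr hv
      · rintro ⟨kk, c', hL', hv'⟩
        obtain ⟨c, hL, hC⟩ := replL_singleton' (hL' ▸ hrep)
        obtain ⟨x, y, z, hcx, hcy⟩ := replC_two hC
        have hcx' : c = x ++ (y ++ z) := by simpa using hcx
        have hcy' : c' = x ++ (([⟨i, o, s⟩, ⟨j, o, -s⟩] : KCode) ++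
            (y ++ ((if ord then ([⟨j, !o, -s⟩, ⟨i, !o, s⟩] : KCode)
              else [⟨i, !o, s⟩, ⟨j, !o, -s⟩]) ++ z))) := by
          rw [hcy]; simp [List.append_assoc]
        have hi' : i ∉ crossIds (x ++ (y ++ z)) := by
          rw [← hcx']
          intro hmem
          rw [hL] at hi
          exact hi ((idsOf_singleton kk c i).mpr hmem)
        have hj' : j ∉ crossIds (x ++ (y ++ z)) := by
          rw [← hcx']
          intro hmem
          rw [hL] at hj
          exact hj ((idsOf_singleton kk c j).mpr hmem)
        refine ⟨kk, c, hL, ?_⟩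
        rw [hcx']
        rw [hcy'] at hv'
        exact (validK_r2 i j o ord s hs hij hi' hj').mp hv'
    · rintro ⟨kk, c, hL, hv⟩ h2
      obtain ⟨c', x, y, z, hL', hcx, hcy, hi', hj'⟩ := main kk c hL
      rw [hL, hL']
      show affP c = affP c'
      have hv' : ValidK c' := by
        rw [hL'] at h2
        exact (inv_cons h2).2
      rw [hcx] at hi' hj' hv
      rw [hcy] at hv' ⊢
      rw [hcx]
      exact (r2_aff i j o ord s hs hij hi' hj' hv hv').symm
  | r3 i j k si sj sk hsi hsj hsk hprod hij hik hjk t segs hsegs hrep =>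
    have hpairs : ∀ r ∈ segs, r.2.Perm r.1 := by
      intro r hr
      have := hsegs.subset hr
      simp only [List.mem_cons, List.not_mem_nil, or_false] at this
      rcases this with h | h | h <;> rw [h] <;> exact pairOf_perm _ _ _
    constructor
    · constructor
      · rintro ⟨kk, c, hL, hv⟩
        obtain ⟨c', hL', hC⟩ := replL_singleton (hL ▸ hrep)
        exact ⟨kk, c', hL', validK_perm (replC_perm hC hpairs).symm hv⟩
      · rintro ⟨kk, c', hL', hv'⟩
        obtain ⟨c, hL, hC⟩ := replL_singleton' (hL' ▸ hrep)
        exact ⟨kk, c, hL, validK_perm (replC_perm hC hpairs) hv'⟩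
    · rintro ⟨kk, c, hL, hv⟩ h2
      obtain ⟨c', hL', hC⟩ := replL_singleton (hL ▸ hrep)
      have hv' : ValidK c' := by
        rw [hL'] at h2
        exact (inv_cons h2).2
      rw [hL, hL']
      exact (r3_aff hv hv' i j k si sj sk hsi hsj hsk hij hik hjk t hsegs hC).symm

end AffPInv

/-- The affine index polynomial `P_K(t)` is invariant under
oriented virtual isotopy: if two labeled oriented virtual knot diagrams are
related by oriented classical Reidemeister moves, virtual Reidemeister moves,
or the detour move (the latter two leave the Gauss code unchanged), then their
affine index polynomials are equal; hence `P_K(t)` is an invariant of virtual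
knots. -/
theorem affP_isotopy_invariant (a b : KCode) (ha : ValidK a) (hb : ValidK b)
    (h : Isotopic [(0, a)] [(0, b)]) : affP a = affP b := by
  have main : ∀ {L L' : LLC}, Relation.EqvGen MoveStep L L' →
      (AffPInv.Inv L ↔ AffPInv.Inv L') ∧
      (AffPInv.Inv L → AffPInv.Inv L' →
        affP (AffPInv.code1 L) = affP (AffPInv.code1 L')) := by
    intro L L' h
    induction h with
    | rel _ _ hr => exact AffPInv.key hr
    | refl _ => exact ⟨Iff.rfl, fun _ _ => rfl⟩
    | symm _ _ _ ih => exact ⟨ih.1.symm, fun h1 h2 => (ih.2 h2 h1).symm⟩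
    | trans x y z _ _ ih1 ih2 =>
        exact ⟨ih1.1.trans ih2.1,
          fun h1 h3 => (ih1.2 h1 (ih1.1.mp h1)).trans (ih2.2 (ih1.1.mp h1) h3)⟩
  exact (main h).2 (AffPInv.inv_mk ha) (AffPInv.inv_mk hb)
end

section
/- A multi-component virtual link diagram D admits an affine labeling if and only if D is compatible, i.e., every component of D has algebraic intersection number zero with the union of the other components: in a traverse of a given component, each self-crossing is met twice with canceling increments +1 and -1, while each crossing with another component is met once with increment equal to its sign relative to that component, so the labeling closes up on every component exactly when each such signed sum vanishes. -/
/-!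
# Virtual knots and links via signed Gauss codes

A virtual knot or link diagram, up to the virtual Reidemeister moves and the
detour move, is faithfully encoded by its signed oriented Gauss code: the
cyclic sequence, along each component, of passages through the classical
crossings, each passage recording the crossing's name, whether the strand
passes over or under, and the crossing sign.  Virtual crossings and the
detour move are invisible in this encoding, so oriented virtual isotopy is
generated by the oriented classical Reidemeister moves together with
re-encoding moves (rotation of the base point, permutation of the components,
renaming of the crossings).
-/

open LaurentPolynomial

lemma labelAt_succ (a : KCode) (k : ℕ) (hk : k < a.length) :
    labelAt a (k + 1) = labelAt a k + (a.getD k default).inc := by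
  unfold labelAt
  rw [List.take_succ, List.getElem?_eq_getElem hk, List.map_append, List.sum_append]
  simp [List.getD, List.getElem?_eq_getElem hk]

/-- In a list of passages in which every crossing id occurs at most twice, and the
increments of a doubly-occurring id cancel, the total increment equals the increment
of the singly-occurring passages. -/
lemma sum_inc_single_aux : ∀ (n : ℕ) (a : KCode), a.length ≤ n →
    (∀ i : ℕ, (a.filter (fun q => q.id == i)).length ≤ 2 ∧
      ((a.filter (fun q => q.id == i)).length = 2 →
        ((a.filter (fun q => q.id == i)).map Passage.inc).sum = 0)) →
    ((a.filter (fun p => (a.filter (fun q => q.id == p.id)).length == 1)).map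
        Passage.inc).sum = (a.map Passage.inc).sum := by
  intro n
  induction n with
  | zero =>
    intro a ha _
    have : a = [] := List.length_eq_zero_iff.mp (Nat.le_zero.mp ha)
    simp [this]
  | succ n ih =>
    intro a ha H
    cases a with
    | nil => simp
    | cons p t =>
      set A := p :: t with hA
      set i0 := p.id with hi0
      set fib := A.filter (fun q => q.id == i0) with hfib
      set b := A.filter (fun q => !(q.id == i0)) with hb
      have hperm : List.Perm (fib ++ b) A := List.filter_append_perm _ A
      have hfib_mem : ∀ q ∈ fib, q.id = i0 := by
        intro q hq
        simpa using (List.mem_filter.mp hq).2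
      have hb_mem : ∀ q ∈ b, q.id ≠ i0 := by
        intro q hq
        simpa using (List.mem_filter.mp hq).2
      have hfilter_perm : ∀ j, j ≠ i0 →
          List.Perm (A.filter (fun r => r.id == j)) (b.filter (fun r => r.id == j)) := by
        intro j hj
        have h1 := (hperm.filter (fun r => r.id == j)).symm
        rw [List.filter_append] at h1
        have h2 : fib.filter (fun r => r.id == j) = [] := by
          rw [List.filter_eq_nil_iff]
          intro q hq
          simp [hfib_mem q hq, Ne.symm hj]
        rwa [h2, List.nil_append] at h1
      -- fib has length 1 or 2
      have hpfib : p ∈ fib := by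
        rw [hfib]
        refine List.mem_filter.mpr ⟨List.mem_cons_self, by simp [hi0]⟩
      have hfib_pos : 1 ≤ fib.length :=
        List.length_pos_iff.mpr (List.ne_nil_of_mem hpfib)
      have hfib_le : fib.length ≤ 2 := (H i0).1
      -- the b-fibers satisfy the hypothesis
      have Hb : ∀ i : ℕ, (b.filter (fun q => q.id == i)).length ≤ 2 ∧
          ((b.filter (fun q => q.id == i)).length = 2 →
            ((b.filter (fun q => q.id == i)).map Passage.inc).sum = 0) := by
        intro i
        by_cases hi : i = i0
        · have : b.filter (fun q => q.id == i) = [] := by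
            rw [List.filter_eq_nil_iff]
            intro q hq
            simp [hi, hb_mem q hq]
          simp [this]
        · have hp := hfilter_perm i hi
          have hlen := hp.length_eq
          have hsum := (hp.map Passage.inc).sum_eq
          refine ⟨by rw [← hlen]; exact (H i).1, fun h2 => ?_⟩
          rw [← hsum]
          exact (H i).2 (by omega)
      have hblen : b.length ≤ n := by
        have h1 : fib.length + b.length = A.length := by
          have := hperm.length_eq
          rwa [List.length_append] at this
        have h2 : A.length ≤ n + 1 := ha
        omega
      have ihb := ih b hblen Hb
      -- evaluate the cross predicate on elements of fib and b
      have hcrossb : ∀ q ∈ b,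
          ((A.filter (fun r => r.id == q.id)).length == 1) =
          ((b.filter (fun r => r.id == q.id)).length == 1) := by
        intro q hq
        rw [(hfilter_perm q.id (hb_mem q hq)).length_eq]
      have hcrossfib : ∀ q ∈ fib,
          ((A.filter (fun r => r.id == q.id)).length == 1) = (fib.length == 1) := by
        intro q hq
        have : A.filter (fun r => r.id == q.id) = fib := by
          rw [hfib, hfib_mem q hq]
        rw [this]
      -- decompose both sides along the permutation
      have hRHS : (A.map Passage.inc).sum
          = (fib.map Passage.inc).sum + (b.map Passage.inc).sum := by
        rw [← (hperm.map Passage.inc).sum_eq, List.map_append, List.sum_append]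
      have hLHS : ((A.filter (fun q =>
            (A.filter (fun r => r.id == q.id)).length == 1)).map Passage.inc).sum
          = ((fib.filter (fun q =>
              (A.filter (fun r => r.id == q.id)).length == 1)).map Passage.inc).sum
            + ((b.filter (fun q =>
              (A.filter (fun r => r.id == q.id)).length == 1)).map Passage.inc).sum := by
        rw [← ((hperm.filter (fun q =>
            (A.filter (fun r => r.id == q.id)).length == 1)).map Passage.inc).sum_eq,
          List.filter_append, List.map_append, List.sum_append]
      have hbfil : b.filter (fun q => (A.filter (fun r => r.id == q.id)).length == 1)
          = b.filter (fun q => (b.filter (fun r => r.id == q.id)).length == 1) :=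
        List.filter_congr hcrossb
      rcases (show fib.length = 1 ∨ fib.length = 2 by omega) with h1 | h2
      · have hfil : fib.filter (fun q =>
            (A.filter (fun r => r.id == q.id)).length == 1) = fib := by
          rw [List.filter_eq_self]
          intro q hq
          rw [hcrossfib q hq, h1]
          rfl
        rw [hLHS, hfil, hbfil, ihb, hRHS]
      · have hfil : fib.filter (fun q =>
            (A.filter (fun r => r.id == q.id)).length == 1) = [] := by
          rw [List.filter_eq_nil_iff]
          intro q hq
          rw [hcrossfib q hq, h2]
          simp
        have hfib0 : (fib.map Passage.inc).sum = 0 := (H i0).2 h2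
        rw [hLHS, hfil, hbfil, ihb, hRHS, hfib0]
        simp

/-- The fiber hypothesis holds for any component of a valid link. -/
lemma fiber_of_valid (L : LCode) (hL : ValidLink L) (a : KCode) (ha : a ∈ L) (i : ℕ) :
    (a.filter (fun q => q.id == i)).length ≤ 2 ∧
      ((a.filter (fun q => q.id == i)).length = 2 →
        ((a.filter (fun q => q.id == i)).map Passage.inc).sum = 0) := by
  set F := L.flatten with hF
  have hsub : List.Sublist a F := List.sublist_flatten_of_mem ha
  have hfs : List.Sublist (a.filter (fun q => q.id == i))
      (F.filter (fun q => q.id == i)) := hsub.filter _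
  by_cases hex : ∃ p ∈ F, p.id = i
  · obtain ⟨p, hpF, hpi⟩ := hex
    obtain ⟨-, hov, hun, hsgn⟩ := hL p hpF
    -- the flat fiber has exactly one over- and one under-passage
    have hovi : (F.filter (fun q => q.id == i && q.isOver)).length = 1 := by
      rw [← hpi] at *; exact hov
    have huni : (F.filter (fun q => q.id == i && !q.isOver)).length = 1 := by
      rw [← hpi] at *; exact hun
    set fF := F.filter (fun q => q.id == i) with hfF
    have hsplit : List.Perm (fF.filter (fun q => q.isOver) ++ fF.filter (fun q => !q.isOver)) fF :=
      List.filter_append_perm _ fF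
    have hov2 : fF.filter (fun q => q.isOver)
        = F.filter (fun q => q.id == i && q.isOver) := by
      rw [hfF, List.filter_filter]
      congr 1
      funext q
      rw [Bool.and_comm]
    have hun2 : fF.filter (fun q => !q.isOver)
        = F.filter (fun q => q.id == i && !q.isOver) := by
      rw [hfF, List.filter_filter]
      congr 1
      funext q
      rw [Bool.and_comm]
    have hfFlen : fF.length = 2 := by
      have := hsplit.length_eq
      rw [List.length_append, hov2, hun2, hovi, huni] at this
      omega
    have hle : (a.filter (fun q => q.id == i)).length ≤ 2 := by
      have := hfs.length_le
      omega
    refine ⟨hle, fun h2 => ?_⟩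
    have heq : a.filter (fun q => q.id == i) = fF :=
      hfs.eq_of_length (by rw [h2, hfFlen])
    obtain ⟨qo, hqo⟩ := List.length_eq_one_iff.mp (by rw [hov2]; exact hovi :
      (fF.filter (fun q => q.isOver)).length = 1)
    obtain ⟨qu, hqu⟩ := List.length_eq_one_iff.mp (by rw [hun2]; exact huni :
      (fF.filter (fun q => !q.isOver)).length = 1)
    have hqo_mem : qo ∈ fF.filter (fun q => q.isOver) := by rw [hqo]; simp
    have hqu_mem : qu ∈ fF.filter (fun q => !q.isOver) := by rw [hqu]; simp
    have hqoF : qo ∈ F := (List.mem_filter.mp ((List.mem_filter.mp hqo_mem).1)).1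
    have hquF : qu ∈ F := (List.mem_filter.mp ((List.mem_filter.mp hqu_mem).1)).1
    have hqo_over : qo.isOver = true := by
      simpa using (List.mem_filter.mp hqo_mem).2
    have hqu_under : qu.isOver = false := by
      simpa using (List.mem_filter.mp hqu_mem).2
    have hqo_id : qo.id = i := by
      simpa using (List.mem_filter.mp ((List.mem_filter.mp hqo_mem).1)).2
    have hqu_id : qu.id = i := by
      simpa using (List.mem_filter.mp ((List.mem_filter.mp hqu_mem).1)).2
    have hsame : qu.sign = qo.sign := by
      obtain ⟨-, -, -, hsgn'⟩ := hL qo hqoF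
      exact hsgn' qu hquF (by rw [hqu_id, hqo_id])
    have hsum : (fF.map Passage.inc).sum = qo.inc + qu.inc := by
      rw [← (hsplit.map Passage.inc).sum_eq, hqo, hqu]
      simp
    rw [heq, hsum]
    unfold Passage.inc
    rw [hqo_over, hqu_under]
    simp [hsame]
  · push_neg at hex
    have hnil : F.filter (fun q => q.id == i) = [] := by
      rw [List.filter_eq_nil_iff]
      intro q hq
      simpa using hex q hq
    have : a.filter (fun q => q.id == i) = [] := by
      have := hfs
      rw [hnil] at this
      exact List.sublist_nil.mp this
    simp [this]

lemma algInt_eq_sum (L : LCode) (hL : ValidLink L) (c : ℕ) (hc : c < L.length) :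
    algInt L c = ((L.getD c []).map Passage.inc).sum := by
  have ha : L.getD c [] ∈ L := by
    rw [List.getD_eq_getElem _ _ hc]
    exact List.getElem_mem hc
  unfold algInt crossPassages
  exact sum_inc_single_aux (L.getD c []).length _ le_rfl
    (fun i => fiber_of_valid L hL _ ha i)

/-- A multi-component virtual link diagram `D` admits an
affine labeling if and only if `D` is compatible, i.e. every component of `D`
has algebraic intersection number zero with the union of the other components
(in a traverse of a component each self-crossing is met twice with canceling
increments, while each crossing with another component is met once with
increment equal to its sign relative to that component, so the labeling closes
up on every component exactly when each such signed sum vanishes). -/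
theorem affine_labeling_iff_compatible (L : LCode) (hL : ValidLink L) :
    (∃ lab : ℕ → ℕ → ℤ, IsAffineLabeling L lab) ↔ Compatible L := by
  constructor
  · rintro ⟨lab, hlab⟩ c hc
    rw [algInt_eq_sum L hL c hc]
    have hlab' := hlab c hc
    revert hlab'
    generalize L.getD c [] = a
    intro hlab'
    rcases Nat.eq_zero_or_pos a.length with h0 | hpos
    · rw [List.length_eq_zero_iff.mp h0]
      simp
    · have key : ∀ k, k < a.length → lab c k = lab c 0 + labelAt a k := by
        intro k
        induction k with
        | zero => intro _; simp [labelAt]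
        | succ k ihk =>
          intro hk1
          have hk : k < a.length := Nat.lt_of_succ_lt hk1
          have h := hlab' k hk
          rw [Nat.mod_eq_of_lt hk1] at h
          rw [h, ihk hk, labelAt_succ a k hk]
          ring
      have hlast := hlab' (a.length - 1) (by omega)
      have hmod : (a.length - 1 + 1) % a.length = 0 := by
        have h1 : a.length - 1 + 1 = a.length := by omega
        rw [h1, Nat.mod_self]
      rw [hmod, key (a.length - 1) (by omega)] at hlast
      have hz : labelAt a (a.length - 1) + (a.getD (a.length - 1) default).inc = 0 := by
        linarith
      rw [← labelAt_succ a (a.length - 1) (by omega)] at hz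
      have hlen : a.length - 1 + 1 = a.length := by omega
      rw [hlen] at hz
      unfold labelAt at hz
      rwa [List.take_length] at hz
  · intro hcomp
    refine ⟨fun c k => labelAt (L.getD c []) k, ?_⟩
    intro c hc k hk
    beta_reduce
    rcases Nat.lt_or_ge (k + 1) (L.getD c []).length with h | h
    · rw [Nat.mod_eq_of_lt h]
      exact labelAt_succ _ k hk
    · have hk1 : k + 1 = (L.getD c []).length := by omega
      rw [hk1, Nat.mod_self]
      have h1 : labelAt (L.getD c []) (k + 1)
          = labelAt (L.getD c []) k + ((L.getD c []).getD k default).inc :=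
        labelAt_succ _ k hk
      have h2 : labelAt (L.getD c []) (k + 1) = 0 := by
        rw [hk1]
        unfold labelAt
        rw [List.take_length, ← algInt_eq_sum L hL c hc]
        exact hcomp c hc
      have h0 : labelAt (L.getD c []) 0 = 0 := by simp [labelAt]
      rw [h0]
      linarith
end

section
/- If K is a virtual knot diagram and K-bar denotes the reverse of K (the diagram with the orientation reversed), then every crossing c of K with corresponding crossing c-bar of K-bar satisfies W(c-bar) = -W(c), and consequently P_{K-bar}(t) = P_K(t^{-1}). -/
/-!
# Virtual knots and links via signed Gauss codes

A virtual knot or link diagram, up to the virtual Reidemeister moves and the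
detour move, is faithfully encoded by its signed oriented Gauss code: the
cyclic sequence, along each component, of passages through the classical
crossings, each passage recording the crossing's name, whether the strand
passes over or under, and the crossing sign.  Virtual crossings and the
detour move are invisible in this encoding, so oriented virtual isotopy is
generated by the oriented classical Reidemeister moves together with
re-encoding moves (rotation of the base point, permutation of the components,
renaming of the crossings).
-/

open LaurentPolynomial

lemma filter_singleton_decomp {P : Passage → Bool} {l : List Passage} {q : Passage}
    (h : l.filter P = [q]) :
    ∃ x y, l = x ++ q :: y ∧ x.filter P = [] ∧ y.filter P = [] := by
  induction l with
  | nil => simp at h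
  | cons p t ih =>
    by_cases hp : P p
    · rw [List.filter_cons_of_pos hp] at h
      obtain ⟨rfl, ht⟩ : p = q ∧ t.filter P = [] := by simpa using h
      exact ⟨[], t, by simp, by simp, ht⟩
    · rw [List.filter_cons_of_neg (by simpa using hp)] at h
      obtain ⟨x, y, rfl, hx, hy⟩ := ih h
      exact ⟨p :: x, y, rfl, by simp [List.filter_cons, hp, hx], hy⟩

lemma findIdx_decomp {P : Passage → Bool} {x y : List Passage} {q : Passage}
    (hx : x.filter P = []) (hq : P q = true) :
    (x ++ q :: y).findIdx P = x.length := by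
  induction x with
  | nil => simp [List.findIdx_cons, hq]
  | cons p t ih =>
    have hp : ¬ P p := by
      intro hPp
      have := List.filter_eq_nil_iff.mp hx p (by simp)
      exact this hPp
    have ht : t.filter P = [] := by
      rw [List.filter_cons_of_neg (by simpa using hp)] at hx; exact hx
    simp [List.findIdx_cons, hp, ih ht]

lemma labelAt_decomp {x y : List Passage} {q : Passage} :
    labelAt (x ++ q :: y) x.length = (x.map Passage.inc).sum := by
  unfold labelAt
  rw [List.take_left]

lemma sgn_eq {l : List Passage} {i : ℕ} {s : ℤ}
    (hex : ∃ r ∈ l, r.id = i)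
    (hsg : ∀ q ∈ l, q.id = i → q.sign = s) : sgn l i = s := by
  obtain ⟨r, hr, hri⟩ := hex
  have hsome : (l.find? (fun p => p.id == i)).isSome :=
    List.find?_isSome.mpr ⟨r, hr, by simp [hri]⟩
  obtain ⟨r', hfind⟩ := Option.isSome_iff_exists.mp hsome
  have hmem : r' ∈ l := List.mem_of_find?_eq_some hfind
  have hid : r'.id = i := by simpa using List.find?_some hfind
  simp [sgn, hfind, hsg r' hmem hid]

lemma key (a : KCode) (ha : ValidK a) (i : ℕ) (hi : i ∈ crossIds a) :
    sgn (reverseK a) i = sgn a i ∧ wt (reverseK a) i = - wt a i := by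
  -- get a witness passage with id i
  have hi' : ∃ p ∈ a, p.id = i := by
    simpa using (List.mem_dedup.mp hi)
  obtain ⟨p, hp, hpi⟩ := hi'
  obtain ⟨hps, hov, hun, hsg⟩ := ha p hp
  rw [hpi] at hov hun
  -- over passage decomposition
  obtain ⟨qo, hqo⟩ := List.length_eq_one_iff.mp hov
  obtain ⟨xo, yo, hao, hxo, hyo⟩ := filter_singleton_decomp hqo
  have hqo_mem : qo ∈ a.filter (fun q => q.id == i && q.isOver) := by rw [hqo]; simp
  have hqo_pred : (qo.id == i && qo.isOver) = true := (List.mem_filter.mp hqo_mem).2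
  have hqo_id : qo.id = i := by simp at hqo_pred; exact hqo_pred.1
  have hqo_over : qo.isOver = true := by simp at hqo_pred; exact hqo_pred.2
  -- under passage decomposition
  obtain ⟨qu, hqu⟩ := List.length_eq_one_iff.mp hun
  obtain ⟨xu, yu, hau, hxu, hyu⟩ := filter_singleton_decomp hqu
  have hqu_mem : qu ∈ a.filter (fun q => q.id == i && !q.isOver) := by rw [hqu]; simp
  have hqu_pred : (qu.id == i && !qu.isOver) = true := (List.mem_filter.mp hqu_mem).2
  have hqu_id : qu.id = i := by simp at hqu_pred; exact hqu_pred.1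
  have hqu_under : qu.isOver = false := by simp at hqu_pred; exact hqu_pred.2
  -- signs
  set s : ℤ := p.sign with hs
  have hsg' : ∀ q ∈ a, q.id = i → q.sign = s := fun q hq hqi => hsg q hq (hqi.trans hpi.symm)
  have hqos : qo.sign = s := hsg' qo ((List.mem_filter.mp hqo_mem).1) hqo_id
  have hqus : qu.sign = s := hsg' qu ((List.mem_filter.mp hqu_mem).1) hqu_id
  have hinco : qo.inc = -s := by simp [Passage.inc, hqo_over, hqos]
  have hincu : qu.inc = s := by simp [Passage.inc, hqu_under, hqus]
  -- sgn values
  have hsgn_a : sgn a i = s := sgn_eq ⟨p, hp, hpi⟩ hsg'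
  have hsgn_r : sgn (reverseK a) i = s := by
    apply sgn_eq
    · exact ⟨p, by simpa [reverseK] using hp, hpi⟩
    · intro q hq hqi
      exact hsg' q (by simpa [reverseK] using hq) hqi
  refine ⟨by rw [hsgn_a, hsgn_r], ?_⟩
  -- positions and labels in a
  have hover_a : overPos a i = xo.length := by
    rw [overPos, hao]; exact findIdx_decomp hxo hqo_pred
  have hunder_a : underPos a i = xu.length := by
    rw [underPos, hau]; exact findIdx_decomp hxu hqu_pred
  have hlab_o : labelAt a (overPos a i) = (xo.map Passage.inc).sum := by
    rw [hover_a, hao]; exact labelAt_decomp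
  have hlab_u : labelAt a (underPos a i) = (xu.map Passage.inc).sum := by
    rw [hunder_a, hau]; exact labelAt_decomp
  -- positions and labels in reverse
  have har_o : reverseK a = yo.reverse ++ qo :: xo.reverse := by
    rw [reverseK, hao]; simp
  have har_u : reverseK a = yu.reverse ++ qu :: xu.reverse := by
    rw [reverseK, hau]; simp
  have hover_r : overPos (reverseK a) i = yo.reverse.length := by
    rw [overPos, har_o]
    exact findIdx_decomp (by rw [List.filter_reverse, hyo]; rfl) hqo_pred
  have hunder_r : underPos (reverseK a) i = yu.reverse.length := by
    rw [underPos, har_u]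
    exact findIdx_decomp (by rw [List.filter_reverse, hyu]; rfl) hqu_pred
  have hlab_or : labelAt (reverseK a) (overPos (reverseK a) i) = (yo.map Passage.inc).sum := by
    rw [hover_r, har_o, labelAt_decomp, List.map_reverse, List.sum_reverse]
  have hlab_ur : labelAt (reverseK a) (underPos (reverseK a) i) = (yu.map Passage.inc).sum := by
    rw [hunder_r, har_u, labelAt_decomp, List.map_reverse, List.sum_reverse]
  -- total sums
  have htot : (xo.map Passage.inc).sum + qo.inc + (yo.map Passage.inc).sum
      = (xu.map Passage.inc).sum + qu.inc + (yu.map Passage.inc).sum := by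
    have h1 : (a.map Passage.inc).sum
        = (xo.map Passage.inc).sum + qo.inc + (yo.map Passage.inc).sum := by
      rw [hao]; simp; ring
    have h2 : (a.map Passage.inc).sum
        = (xu.map Passage.inc).sum + qu.inc + (yu.map Passage.inc).sum := by
      rw [hau]; simp; ring
    rw [← h1, h2]
  rw [wt, wt, hsgn_a, hsgn_r, hlab_o, hlab_u, hlab_or, hlab_ur]
  rw [hinco, hincu] at htot
  linarith

lemma crossIds_reverse_perm (a : KCode) : (crossIds (reverseK a)).Perm (crossIds a) := by
  apply (List.perm_ext_iff_of_nodup (List.nodup_dedup _) (List.nodup_dedup _)).mpr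
  intro x
  simp [crossIds, reverseK]

/-- If `K̄` denotes the reverse of `K` (the diagram with the
orientation reversed), then every crossing `c` of `K` with corresponding
crossing `c̄` of `K̄` satisfies `W(c̄) = -W(c)`, and consequently
`P_{K̄}(t) = P_K(t⁻¹)`. -/
theorem affP_reverse (a : KCode) (ha : ValidK a) :
    (∀ i ∈ crossIds a, wt (reverseK a) i = - wt a i) ∧
      affP (reverseK a) = LaurentPolynomial.invert (affP a) := by
  refine ⟨fun i hi => (key a ha i hi).2, ?_⟩
  rw [affP, affP, map_list_sum, List.map_map]
  rw [← ((crossIds_reverse_perm a).map _).sum_eq]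
  congr 1
  apply List.map_congr_left
  intro i hi
  have hi' : i ∈ crossIds a := (crossIds_reverse_perm a).mem_iff.mp hi
  obtain ⟨hsgn, hwt⟩ := key a ha i hi'
  simp [hsgn, hwt, mul_sub, mul_sub]
end

section
/- If K is a virtual knot diagram and K* denotes the flat mirror image of K (the diagram obtained by switching all classical crossings of K), then P_{K*}(t) = -P_K(t^{-1}). -/
/-!
# Virtual knots and links via signed Gauss codes

A virtual knot or link diagram, up to the virtual Reidemeister moves and the
detour move, is faithfully encoded by its signed oriented Gauss code: the
cyclic sequence, along each component, of passages through the classical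
crossings, each passage recording the crossing's name, whether the strand
passes over or under, and the crossing sign.  Virtual crossings and the
detour move are invisible in this encoding, so oriented virtual isotopy is
generated by the oriented classical Reidemeister moves together with
re-encoding moves (rotation of the base point, permutation of the components,
renaming of the crossings).
-/

open LaurentPolynomial

private lemma my_findIdx_map {α β} (f : α → β) (l : List α) (p : β → Bool) :
    (l.map f).findIdx p = l.findIdx (fun x => p (f x)) := by
  induction l with
  | nil => rfl
  | cons x xs ih => simp [List.findIdx_cons, ih]

private lemma inc_switch (p : Passage) :
    Passage.inc ⟨p.id, !p.isOver, -p.sign⟩ = p.inc := by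
  cases h : p.isOver <;> simp [Passage.inc, h]

private lemma labelAt_switch (a : KCode) (k : ℕ) :
    labelAt (switchAll a) k = labelAt a k := by
  unfold labelAt switchAll
  rw [← List.map_take, List.map_map]
  congr 1
  exact List.map_congr_left (fun p _ => inc_switch p)

private lemma overPos_switch (a : KCode) (i : ℕ) :
    overPos (switchAll a) i = underPos a i := by
  unfold overPos underPos switchAll
  rw [my_findIdx_map]

private lemma underPos_switch (a : KCode) (i : ℕ) :
    underPos (switchAll a) i = overPos a i := by
  unfold overPos underPos switchAll
  rw [my_findIdx_map]
  congr 1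
  funext p
  simp

private lemma sgn_switch (a : KCode) (i : ℕ) :
    sgn (switchAll a) i = - sgn a i := by
  unfold sgn switchAll
  rw [List.find?_map]
  have hpred : ((fun p : Passage => p.id == i) ∘ fun p : Passage => (⟨p.id, !p.isOver, -p.sign⟩ : Passage))
      = (fun p : Passage => p.id == i) := rfl
  rw [hpred]
  cases a.find? (fun p => p.id == i) <;> simp [Function.comp]

private lemma wt_switch (a : KCode) (i : ℕ) :
    wt (switchAll a) i = - wt a i := by
  unfold wt
  rw [overPos_switch, underPos_switch, sgn_switch, labelAt_switch, labelAt_switch]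
  ring

private lemma crossIds_switch (a : KCode) : crossIds (switchAll a) = crossIds a := by
  unfold crossIds switchAll
  rw [List.map_map]
  rfl

open LaurentPolynomial in
private lemma sum_neg_invert (l : List ℕ) (f g : ℕ → LaurentPolynomial ℤ)
    (h : ∀ i ∈ l, f i = -(invert (g i))) :
    (l.map f).sum = - invert ((l.map g).sum) := by
  induction l with
  | nil => simp
  | cons x xs ih =>
    simp only [List.map_cons, List.sum_cons, map_add, neg_add,
      h x List.mem_cons_self]
    rw [ih (fun i hi => h i (List.mem_cons_of_mem x hi))]

/-- If `K*` denotes the flat mirror image of `K` (the diagram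
obtained by switching all classical crossings of `K`), then
`P_{K*}(t) = -P_K(t⁻¹)`. -/
theorem affP_flat_mirror (a : KCode) (ha : ValidK a) :
    affP (switchAll a) = - LaurentPolynomial.invert (affP a) := by
  unfold affP
  rw [crossIds_switch]
  apply sum_neg_invert
  intro i _
  rw [sgn_switch, wt_switch, map_mul, map_sub, map_one, invert_C, invert_T, map_neg]
  ring
end
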